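/- arXiv:2502.04136 — 3 statements merged into one kernel-verified Lean document; each statement's English description precedes it below -/
import Mathlib

section
/- For integers r ≥ 2 and m ≥ 1, the number of permutations of {1,...,rm} all of whose cycle lengths are not divisible by r equals (rm)! · (r-1)(2r-1)⋯(mr-1) / (r^m · m!). -/
open Equiv Function Finset


variable {α β : Type*}

/-- period sets match ⇒ minimal periods equal -/
lemma mp_eq_of_iff {f : α → α} {g : β → β} {x : α} {y : β}
    (h : ∀ n, IsPeriodicPt f n x ↔ IsPeriodicPt g n y) :
    minimalPeriod f x = minimalPeriod g y :=
  Nat.dvd_antisymm ((h _).mpr (isPeriodicPt_minimalPeriod g y)).minimalPeriod_dvd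
    ((h _).mp (isPeriodicPt_minimalPeriod f x)).minimalPeriod_dvd

lemma perm_mem_periodicPts [Finite α] (f : Perm α) (x : α) : x ∈ periodicPts f := by
  refine ⟨orderOf f, ?_, ?_⟩
  · exact orderOf_pos f
  · show f^[orderOf f] x = x
    rw [← Equiv.Perm.coe_pow, pow_orderOf_eq_one]; rfl

lemma iterate_permCongr (e : α ≃ β) (σ : Perm α) (k : ℕ) (x : α) :
    (e.permCongr σ)^[k] (e x) = e (σ^[k] x) := by
  induction k with
  | zero => simp
  | succ k ih => rw [iterate_succ_apply', iterate_succ_apply', ih, permCongr_apply, symm_apply_apply]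

lemma mp_permCongr (e : α ≃ β) (σ : Perm α) (x : α) :
    minimalPeriod (⇑(e.permCongr σ)) (e x) = minimalPeriod (⇑σ) x := by
  refine mp_eq_of_iff fun n => ?_
  unfold IsPeriodicPt IsFixedPt
  rw [iterate_permCongr]
  exact ⟨fun h => e.injective h, fun h => by rw [h]⟩

lemma sameCycle_permCongr [Finite α] (e : α ≃ β) (σ : Perm α) (x y : α) :
    (e.permCongr σ).SameCycle (e x) (e y) ↔ σ.SameCycle x y := by
  have hfin : Finite β := Finite.of_equiv α e
  constructor
  · rintro h
    obtain ⟨i, -, hi⟩ := h.exists_pow_eq'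
    refine ⟨i, ?_⟩
    rw [zpow_natCast]
    have h2 : ((e.permCongr σ) ^ i) (e x) = e y := hi
    rw [← Equiv.Perm.iterate_eq_pow] at h2
    rw [iterate_permCongr] at h2
    rw [← Equiv.Perm.iterate_eq_pow]
    exact e.injective h2
  · rintro h
    obtain ⟨i, -, hi⟩ := h.exists_pow_eq'
    refine ⟨i, ?_⟩
    rw [zpow_natCast, ← Equiv.Perm.iterate_eq_pow, iterate_permCongr, ← hi, Equiv.Perm.iterate_eq_pow]
set_option linter.unusedSectionVars false

variable {α : Type*} [DecidableEq α] [Fintype α]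

/-- the permutation of `Option α` inserting `none` into the cycle of `p`. -/
def sp (τ : Perm α) (p : α) : Perm (Option α) :=
  Equiv.swap none (some p) * τ.optionCongr

lemma sp_eq_dec (τ : Perm α) (p : α) :
    Equiv.Perm.decomposeOption.symm (some p, τ) = sp τ p := rfl

lemma sp_apply_none (τ : Perm α) (p : α) : sp τ p none = some p := by
  simp [sp]

lemma sp_apply_some (τ : Perm α) (p : α) (y : α) :
    sp τ p (some y) = if τ y = p then none else some (τ y) := by
  by_cases h : τ y = p
  · simp [sp, h]
  · simp only [sp, Perm.mul_apply, optionCongr_apply, Option.map_some]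
    rw [Equiv.swap_apply_of_ne_of_ne (by simp) (by simpa using h), if_neg h]

lemma not_sameCycle_iterate_ne {τ : Perm α} {p y : α} (h : ¬ τ.SameCycle p y) (k : ℕ) :
    τ^[k] y ≠ p := by
  intro hk
  exact h (Perm.SameCycle.symm ⟨k, by rw [zpow_natCast, ← Equiv.Perm.iterate_eq_pow, hk]⟩)

lemma sp_iterate_some {τ : Perm α} {p y : α} (h : ¬ τ.SameCycle p y) (k : ℕ) :
    (sp τ p)^[k] (some y) = some (τ^[k] y) := by
  induction k with
  | zero => rfl
  | succ k ih =>
      have hne : ¬ τ (τ^[k] y) = p := by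
        have := not_sameCycle_iterate_ne h (k+1)
        rwa [iterate_succ_apply'] at this
      rw [iterate_succ_apply', ih, sp_apply_some, if_neg hne, iterate_succ_apply']

lemma sp_mp_some {τ : Perm α} {p y : α} (h : ¬ τ.SameCycle p y) :
    minimalPeriod (⇑(sp τ p)) (some y) = minimalPeriod (⇑τ) y := by
  refine mp_eq_of_iff fun n => ?_
  unfold IsPeriodicPt IsFixedPt
  rw [sp_iterate_some h]
  exact ⟨fun hx => by simpa using hx, fun hx => by rw [hx]⟩

lemma sp_iterate_none {τ : Perm α} {p : α} (k : ℕ) (hk : k < minimalPeriod (⇑τ) p) :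
    (sp τ p)^[k+1] none = some (τ^[k] p) := by
  induction k with
  | zero => exact sp_apply_none τ p
  | succ k ih =>
      have hne : ¬ τ (τ^[k] p) = p := by
        have := not_isPeriodicPt_of_pos_of_lt_minimalPeriod
          (f := ⇑τ) (x := p) (n := k+1) (by omega) hk
        rwa [IsPeriodicPt, IsFixedPt, iterate_succ_apply'] at this
      rw [iterate_succ_apply', ih (by omega), sp_apply_some, if_neg hne, iterate_succ_apply']

lemma sp_mp_none (τ : Perm α) (p : α) :
    minimalPeriod (⇑(sp τ p)) none = minimalPeriod (⇑τ) p + 1 := by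
  have hℓ : 0 < minimalPeriod (⇑τ) p :=
    minimalPeriod_pos_of_mem_periodicPts (perm_mem_periodicPts τ p)
  obtain ⟨ℓ', hℓ'⟩ : ∃ ℓ', minimalPeriod (⇑τ) p = ℓ' + 1 := ⟨minimalPeriod (⇑τ) p - 1, by omega⟩
  have hper : IsPeriodicPt (⇑(sp τ p)) (minimalPeriod (⇑τ) p + 1) none := by
    show (sp τ p)^[minimalPeriod (⇑τ) p + 1] none = none
    rw [hℓ', iterate_succ_apply' (n := ℓ' + 1), sp_iterate_none (τ := τ) (p := p) ℓ' (by omega), sp_apply_some,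
      if_pos]
    have := iterate_minimalPeriod (f := ⇑τ) (x := p)
    rw [hℓ', iterate_succ_apply'] at this
    exact this
  have h1 : minimalPeriod (⇑(sp τ p)) none ∣ minimalPeriod (⇑τ) p + 1 := hper.minimalPeriod_dvd
  have h2 : 0 < minimalPeriod (⇑(sp τ p)) none :=
    minimalPeriod_pos_of_mem_periodicPts (perm_mem_periodicPts _ none)
  by_contra hne
  have hlt : minimalPeriod (⇑(sp τ p)) none < minimalPeriod (⇑τ) p + 1 :=
    lt_of_le_of_ne (Nat.le_of_dvd (Nat.succ_pos _) h1) hne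
  obtain ⟨j, hj⟩ : ∃ j, minimalPeriod (⇑(sp τ p)) none = j + 1 := ⟨minimalPeriod (⇑(sp τ p)) none - 1, by omega⟩
  have hit := iterate_minimalPeriod (f := ⇑(sp τ p)) (x := none)
  rw [hj, sp_iterate_none (τ := τ) (p := p) j (by omega)] at hit
  exact Option.some_ne_none _ hit

lemma sp_sameCycle_none_iff (τ : Perm α) (p : α) (z : Option α) :
    (sp τ p).SameCycle none z ↔ z = none ∨ ∃ y, z = some y ∧ τ.SameCycle p y := by
  constructor
  · intro h
    obtain ⟨i, -, hi⟩ := h.exists_pow_eq'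
    rw [← Equiv.Perm.iterate_eq_pow] at hi
    rw [← iterate_mod_minimalPeriod_eq, sp_mp_none] at hi
    have hklt : i % (minimalPeriod (⇑τ) p + 1) < minimalPeriod (⇑τ) p + 1 :=
      Nat.mod_lt _ (by omega)
    rcases Nat.eq_zero_or_pos (i % (minimalPeriod (⇑τ) p + 1)) with h0 | h0
    · left; rw [h0] at hi; exact hi.symm
    · right
      obtain ⟨j, hj⟩ : ∃ j, i % (minimalPeriod (⇑τ) p + 1) = j + 1 := ⟨i % (minimalPeriod (⇑τ) p + 1) - 1, by omega⟩
      rw [hj, sp_iterate_none (τ := τ) (p := p) j (by omega)] at hi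
      exact ⟨τ^[j] p, hi.symm, ⟨j, by rw [zpow_natCast, ← Equiv.Perm.iterate_eq_pow]⟩⟩
  · rintro (rfl | ⟨y, rfl, hy⟩)
    · exact Perm.SameCycle.refl _ _
    · obtain ⟨i, -, hi⟩ := hy.exists_pow_eq'
      rw [← Equiv.Perm.iterate_eq_pow] at hi
      rw [← iterate_mod_minimalPeriod_eq] at hi
      have hklt : i % minimalPeriod (⇑τ) p < minimalPeriod (⇑τ) p :=
        Nat.mod_lt _ (minimalPeriod_pos_of_mem_periodicPts (perm_mem_periodicPts τ p))
      refine ⟨((i % minimalPeriod (⇑τ) p) + 1 : ℕ), ?_⟩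
      rw [zpow_natCast, ← Equiv.Perm.iterate_eq_pow, sp_iterate_none _ hklt, hi]

lemma sp_mp_some_of_sameCycle {τ : Perm α} {p y : α} (h : τ.SameCycle p y) :
    minimalPeriod (⇑(sp τ p)) (some y) = minimalPeriod (⇑τ) p + 1 := by
  have hsc := (sp_sameCycle_none_iff τ p (some y)).mpr (Or.inr ⟨y, rfl, h⟩)
  obtain ⟨i, -, hi⟩ := hsc.exists_pow_eq'
  rw [← Equiv.Perm.iterate_eq_pow] at hi
  rw [← hi, minimalPeriod_apply_iterate (perm_mem_periodicPts _ _), sp_mp_none]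
lemma oc_iterate_some (τ : Perm α) (y : α) (k : ℕ) :
    (τ.optionCongr)^[k] (some y) = some (τ^[k] y) := by
  induction k with
  | zero => rfl
  | succ k ih => rw [iterate_succ_apply', ih, iterate_succ_apply']; rfl

lemma oc_mp_some (τ : Perm α) (y : α) :
    minimalPeriod (⇑τ.optionCongr) (some y) = minimalPeriod (⇑τ) y := by
  refine mp_eq_of_iff fun n => ?_
  unfold IsPeriodicPt IsFixedPt
  rw [oc_iterate_some]
  exact ⟨fun hx => by simpa using hx, fun hx => by rw [hx]⟩

lemma oc_mp_none (τ : Perm α) :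
    minimalPeriod (⇑τ.optionCongr) none = 1 := by
  rw [minimalPeriod_eq_one_iff_isFixedPt]
  show τ.optionCongr none = none
  simp

lemma oc_sameCycle_none (τ : Perm α) (z : Option α) :
    Equiv.Perm.SameCycle τ.optionCongr none z ↔ z = none := by
  constructor
  · intro h
    obtain ⟨i, -, hi⟩ := h.exists_pow_eq'
    rw [← Equiv.Perm.iterate_eq_pow] at hi
    rw [← hi]
    have : IsFixedPt (⇑τ.optionCongr) none := by show τ.optionCongr none = none; simp
    exact (this.iterate i).symm ▸ rfl
  · rintro rfl; exact Perm.SameCycle.refl _ _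

/-- regularity characterization for `decomposeOption.symm (some p, τ)`. -/
lemma reg_sp_iff {r : ℕ} (hr : 2 ≤ r) (τ : Perm α) (p : α) :
    (∀ x, ¬ r ∣ minimalPeriod (⇑(sp τ p)) x) ↔
      ((∀ y, ¬ τ.SameCycle p y → ¬ r ∣ minimalPeriod (⇑τ) y) ∧
        ¬ r ∣ (minimalPeriod (⇑τ) p + 1)) := by
  constructor
  · intro h
    refine ⟨fun y hy => ?_, ?_⟩
    · have := h (some y); rwa [sp_mp_some hy] at this
    · have := h none; rwa [sp_mp_none] at this
  · rintro ⟨h1, h2⟩ x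
    match x with
    | none => rw [sp_mp_none]; exact h2
    | some y =>
        by_cases hy : τ.SameCycle p y
        · rw [sp_mp_some_of_sameCycle hy]; exact h2
        · rw [sp_mp_some hy]; exact h1 y hy

/-- regularity characterization for `decomposeOption.symm (none, τ)`. -/
lemma reg_oc_iff {r : ℕ} (hr : 2 ≤ r) (τ : Perm α) :
    (∀ x, ¬ r ∣ minimalPeriod (⇑τ.optionCongr) x) ↔
      (∀ y, ¬ r ∣ minimalPeriod (⇑τ) y) := by
  constructor
  · intro h y; have := h (some y); rwa [oc_mp_some] at this
  · rintro h x
    match x with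
    | none => rw [oc_mp_none, Nat.dvd_one]; omega
    | some y => rw [oc_mp_some]; exact h y

/-- marked-cycle condition characterization for `decomposeOption.symm (some p, τ)`. -/
lemma cond_sp_iff {r c : ℕ} (τ : Perm α) (p : α) :
    ((∀ x, ¬ (sp τ p).SameCycle none x → ¬ r ∣ minimalPeriod (⇑(sp τ p)) x) ∧
        minimalPeriod (⇑(sp τ p)) none % r = c) ↔
      ((∀ y, ¬ τ.SameCycle p y → ¬ r ∣ minimalPeriod (⇑τ) y) ∧
        (minimalPeriod (⇑τ) p + 1) % r = c) := by
  rw [sp_mp_none]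
  constructor
  · rintro ⟨h1, h2⟩
    refine ⟨fun y hy => ?_, h2⟩
    have hns : ¬ (sp τ p).SameCycle none (some y) := by
      rw [sp_sameCycle_none_iff]
      push_neg
      exact ⟨by simp, fun z hz => by simp_all⟩
    have := h1 _ hns; rwa [sp_mp_some hy] at this
  · rintro ⟨h1, h2⟩
    refine ⟨fun x hx => ?_, h2⟩
    match x with
    | none => exact absurd (Perm.SameCycle.refl _ _) hx
    | some y =>
        rw [sp_sameCycle_none_iff] at hx
        push_neg at hx
        obtain ⟨-, hx⟩ := hx
        have hy : ¬ τ.SameCycle p y := fun hsc => (hx y rfl) hsc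
        rw [sp_mp_some hy]; exact h1 y hy

/-- marked-cycle condition characterization for `decomposeOption.symm (none, τ)`. -/
lemma cond_oc_iff {r c : ℕ} (hr : 2 ≤ r) (τ : Perm α) :
    ((∀ x, ¬ Equiv.Perm.SameCycle τ.optionCongr none x → ¬ r ∣ minimalPeriod (⇑τ.optionCongr) x) ∧
        minimalPeriod (⇑τ.optionCongr) none % r = c) ↔
      ((∀ y, ¬ r ∣ minimalPeriod (⇑τ) y) ∧ c = 1) := by
  rw [oc_mp_none, Nat.mod_eq_of_lt (by omega)]
  constructor
  · rintro ⟨h1, h2⟩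
    refine ⟨fun y => ?_, h2.symm⟩
    have hns : ¬ Equiv.Perm.SameCycle τ.optionCongr none (some y) := by
      rw [oc_sameCycle_none]; simp
    have := h1 _ hns; rwa [oc_mp_some] at this
  · rintro ⟨h1, rfl⟩
    refine ⟨fun x hx => ?_, rfl⟩
    match x with
    | none => exact absurd (Perm.SameCycle.refl _ _) hx
    | some y => rw [oc_mp_some]; exact h1 y
noncomputable def Areg (r n : ℕ) : ℕ :=
  Nat.card {σ : Perm (Fin n) // ∀ x, ¬ r ∣ minimalPeriod ⇑σ x}

noncomputable def Greg (r n c : ℕ) : ℕ :=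
  Nat.card {x : Fin n × Perm (Fin n) //
    (∀ y, ¬ x.2.SameCycle x.1 y → ¬ r ∣ minimalPeriod (⇑x.2) y) ∧
      minimalPeriod (⇑x.2) x.1 % r = c}

lemma nat_card_sigma {ι : Type*} [Fintype ι] (f : ι → Type*) [∀ i, Finite (f i)] :
    Nat.card (Σ i, f i) = ∑ i, Nat.card (f i) := by
  letI : ∀ i, Fintype (f i) := fun i => Fintype.ofFinite _
  simp [Nat.card_eq_fintype_card, Fintype.card_sigma]

lemma Areg_zero (r : ℕ) : Areg r 0 = 1 := by
  rw [Areg, Nat.card_congr (Equiv.subtypeUnivEquiv (fun σ => fun x => x.elim0)),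
    Nat.card_eq_fintype_card, Fintype.card_perm]
  simp

lemma Greg_zero (r c : ℕ) : Greg r 0 c = 0 := by
  have : IsEmpty {x : Fin 0 × Perm (Fin 0) //
    (∀ y, ¬ x.2.SameCycle x.1 y → ¬ r ∣ minimalPeriod (⇑x.2) y) ∧
      minimalPeriod (⇑x.2) x.1 % r = c} := ⟨fun x => x.1.1.elim0⟩
  rw [Greg, Nat.card_of_isEmpty]

lemma mod_succ_iff {r c : ℕ} (hr : 2 ≤ r) (hc : c < r) (a : ℕ) :
    (a + 1) % r = c ↔ a % r = (c + r - 1) % r := by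
  have hb : a % r < r := Nat.mod_lt _ (by omega)
  have h2 : (a + 1) % r = (a % r + 1) % r := by
    conv_lhs => rw [Nat.add_mod, Nat.mod_eq_of_lt (show 1 < r by omega)]
  have hrhs : (c + r - 1) % r = if c = 0 then r - 1 else c - 1 := by
    by_cases h0 : c = 0
    · rw [if_pos h0, h0, Nat.mod_eq_of_lt (show 0 + r - 1 < r by omega)]; omega
    · rw [if_neg h0, Nat.mod_eq_sub_mod (by omega),
        show c + r - 1 - r = c - 1 by omega, Nat.mod_eq_of_lt (show c - 1 < r by omega)]
  rw [h2, hrhs]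
  generalize hbdef : a % r = b at hb ⊢
  by_cases hbr : b + 1 = r
  · rw [hbr, Nat.mod_self]
    by_cases h0 : c = 0 <;> simp [h0] <;> omega
  · rw [Nat.mod_eq_of_lt (show b + 1 < r by omega)]
    by_cases h0 : c = 0 <;> simp [h0] <;> omega
lemma dec_none_eq (τ : Perm α) :
    Equiv.Perm.decomposeOption.symm (none, τ) = τ.optionCongr := by
  ext x
  simp [Equiv.Perm.decomposeOption_symm_apply, Equiv.swap_self]

lemma card_prod_eq_sum {β γ : Type*} [Fintype β] [Finite γ] (Q : β × γ → Prop) :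
    Nat.card {x : β × γ // Q x} = ∑ b : β, Nat.card {c : γ // Q (b, c)} := by
  rw [Nat.card_congr (Equiv.subtypeProdEquivSigmaSubtype (fun b (c : γ) => Q (b, c)))]
  exact nat_card_sigma _

lemma card_perm_option_decompose {β : Type*} [DecidableEq β] [Fintype β]
    (P : Perm (Option β) → Prop) :
    Nat.card {σ : Perm (Option β) // P σ} =
      Nat.card {τ : Perm β // P τ.optionCongr} +
        ∑ p : β, Nat.card {τ : Perm β // P (sp τ p)} := by
  have e1 : {σ : Perm (Option β) // P σ} ≃
      {x : Option β × Perm β // P (Equiv.Perm.decomposeOption.symm x)} :=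
    Equiv.subtypeEquiv Equiv.Perm.decomposeOption (fun σ => by rw [Equiv.symm_apply_apply])
  rw [Nat.card_congr e1,
    Nat.card_congr (Equiv.subtypeProdEquivSigmaSubtype
      (fun (o : Option β) (τ : Perm β) => P (Equiv.Perm.decomposeOption.symm (o, τ)))),
    nat_card_sigma, Fintype.sum_option]
  congr 1
  exact Nat.card_congr (Equiv.subtypeEquivRight (fun τ => by rw [dec_none_eq]))

lemma Areg_succ {r : ℕ} (hr : 2 ≤ r) (n : ℕ) :
    Areg r (n+1) = Areg r n +
      Nat.card {x : Fin n × Perm (Fin n) //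
        (∀ y, ¬ x.2.SameCycle x.1 y → ¬ r ∣ minimalPeriod (⇑x.2) y) ∧
          ¬ r ∣ (minimalPeriod (⇑x.2) x.1 + 1)} := by
  have e0 : {σ : Perm (Fin (n+1)) // ∀ x, ¬ r ∣ minimalPeriod ⇑σ x} ≃
      {σ : Perm (Option (Fin n)) // ∀ x, ¬ r ∣ minimalPeriod ⇑σ x} := by
    refine Equiv.subtypeEquiv (Equiv.permCongr (finSuccEquiv n)) (fun σ => ?_)
    constructor
    · intro h x
      obtain ⟨y, rfl⟩ := (finSuccEquiv n).surjective x
      rw [mp_permCongr]; exact h y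
    · intro h y
      have := h ((finSuccEquiv n) y)
      rwa [mp_permCongr] at this
  rw [Areg, Nat.card_congr e0, card_perm_option_decompose]
  congr 1
  · exact Nat.card_congr (Equiv.subtypeEquivRight (fun τ => reg_oc_iff hr τ))
  · rw [card_prod_eq_sum]
    exact Finset.sum_congr rfl fun p _ =>
      Nat.card_congr (Equiv.subtypeEquivRight (fun τ => reg_sp_iff hr τ p))

lemma cond_card_conj {r c n : ℕ} (p : Fin (n+1)) :
    Nat.card {σ : Perm (Fin (n+1)) //
      (∀ y, ¬ σ.SameCycle p y → ¬ r ∣ minimalPeriod (⇑σ) y) ∧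
        minimalPeriod (⇑σ) p % r = c} =
    Nat.card {σ : Perm (Option (Fin n)) //
      (∀ y, ¬ σ.SameCycle none y → ¬ r ∣ minimalPeriod (⇑σ) y) ∧
        minimalPeriod (⇑σ) none % r = c} := by
  set e : Fin (n+1) ≃ Option (Fin n) := (Equiv.swap p 0).trans (finSuccEquiv n) with he
  have hp : e p = none := by simp [he]
  apply Nat.card_congr
  refine Equiv.subtypeEquiv (Equiv.permCongr e) (fun σ => ?_)
  constructor
  · rintro ⟨h1, h2⟩
    refine ⟨fun x hx => ?_, ?_⟩
    · obtain ⟨y, rfl⟩ := e.surjective x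
      rw [mp_permCongr]
      refine h1 y (fun hsc => hx ?_)
      rw [← hp]
      exact (sameCycle_permCongr e σ p y).mpr hsc
    · rw [← hp, mp_permCongr]; exact h2
  · rintro ⟨h1, h2⟩
    refine ⟨fun y hy => ?_, ?_⟩
    · have hxc : ¬ (Equiv.permCongr e σ).SameCycle none (e y) := fun hsc => by
        rw [← hp] at hsc
        exact hy ((sameCycle_permCongr e σ p y).mp hsc)
      have := h1 (e y) hxc
      rwa [mp_permCongr] at this
    · rw [← hp, mp_permCongr] at h2; exact h2

lemma Greg_succ {r c : ℕ} (hr : 2 ≤ r) (hc : c < r) (n : ℕ) :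
    Greg r (n+1) c =
      (n+1) * (Greg r n ((c + r - 1) % r) + if c = 1 then Areg r n else 0) := by
  rw [Greg, card_prod_eq_sum]
  have hterm : ∀ p : Fin (n+1),
      Nat.card {σ : Perm (Fin (n+1)) //
        (∀ y, ¬ σ.SameCycle p y → ¬ r ∣ minimalPeriod (⇑σ) y) ∧
          minimalPeriod (⇑σ) p % r = c} =
      Greg r n ((c + r - 1) % r) + if c = 1 then Areg r n else 0 := by
    intro p
    rw [cond_card_conj (r := r) (c := c) p,
      card_perm_option_decompose (fun σ =>
        (∀ y, ¬ σ.SameCycle none y → ¬ r ∣ minimalPeriod (⇑σ) y) ∧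
          minimalPeriod (⇑σ) none % r = c)]
    rw [add_comm]
    congr 1
    · -- sum over insertion point = Greg r n ((c+r-1)%r)
      rw [Greg, card_prod_eq_sum]
      refine Finset.sum_congr rfl fun q _ => ?_
      refine Nat.card_congr (Equiv.subtypeEquivRight (fun τ => ?_))
      rw [cond_sp_iff]
      constructor
      · rintro ⟨ha, hb⟩
        exact ⟨ha, by rwa [← mod_succ_iff hr hc]⟩
      · rintro ⟨ha, hb⟩
        exact ⟨ha, by rwa [mod_succ_iff hr hc]⟩
    · -- optionCongr part
      by_cases h1 : c = 1
      · subst h1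
        rw [if_pos rfl, Areg]
        refine Nat.card_congr (Equiv.subtypeEquivRight (fun τ => ?_))
        rw [cond_oc_iff hr]
        simp
      · rw [if_neg h1]
        have : IsEmpty {τ : Perm (Fin n) //
            (∀ x, ¬ Equiv.Perm.SameCycle τ.optionCongr none x →
              ¬ r ∣ minimalPeriod (⇑τ.optionCongr) x) ∧
            minimalPeriod (⇑τ.optionCongr) none % r = c} := by
          refine ⟨fun t => h1 ?_⟩
          have := ((cond_oc_iff (c := c) hr t.1).mp t.2).2
          exact this
        rw [Nat.card_of_isEmpty]
  rw [Finset.sum_congr rfl (fun p _ => hterm p), Finset.sum_const, Finset.card_univ,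
    Fintype.card_fin, smul_eq_mul]
lemma dvd_succ_iff {r : ℕ} (hr : 2 ≤ r) (a : ℕ) : r ∣ (a + 1) ↔ a % r = r - 1 := by
  rw [Nat.dvd_iff_mod_eq_zero, mod_succ_iff hr (show 0 < r by omega),
    Nat.mod_eq_of_lt (show 0 + r - 1 < r by omega)]
  omega

lemma B_eq {r : ℕ} (hr : 2 ≤ r) (n : ℕ) :
    Nat.card {x : Fin n × Perm (Fin n) //
        (∀ y, ¬ x.2.SameCycle x.1 y → ¬ r ∣ minimalPeriod (⇑x.2) y) ∧
          ¬ r ∣ (minimalPeriod (⇑x.2) x.1 + 1)} =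
      ∑ c ∈ Finset.range (r - 1), Greg r n c := by
  classical
  rw [Nat.card_eq_fintype_card, Fintype.card_subtype]
  rw [Finset.card_eq_sum_card_fiberwise
    (f := fun x : Fin n × Perm (Fin n) => minimalPeriod (⇑x.2) x.1 % r)
    (t := Finset.range (r - 1)) ?hmem]
  case hmem =>
    intro x hx
    simp only [Finset.mem_coe, Finset.mem_filter] at hx ⊢
    have h1 : minimalPeriod (⇑x.2) x.1 % r < r := Nat.mod_lt _ (by omega)
    have h2 : ¬ minimalPeriod (⇑x.2) x.1 % r = r - 1 := by
      intro h; exact hx.2.2 ((dvd_succ_iff hr _).mpr h)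
    rw [Finset.mem_range]
    show minimalPeriod (⇑x.2) x.1 % r < r - 1
    omega
  refine Finset.sum_congr rfl fun c hc => ?_
  rw [Finset.mem_range] at hc
  rw [Finset.filter_filter, Greg, Nat.card_eq_fintype_card, Fintype.card_subtype]
  congr 1
  apply Finset.filter_congr
  intro x _
  constructor
  · rintro ⟨⟨h1, -⟩, h2⟩; exact ⟨h1, h2⟩
  · rintro ⟨h1, h2⟩
    have h2' : minimalPeriod (⇑x.2) x.1 % r = c := h2
    refine ⟨⟨h1, ?_⟩, h2⟩
    rw [dvd_succ_iff hr]
    omega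

noncomputable def Piq (r q : ℕ) : ℚ :=
  ∏ k ∈ Finset.Icc 1 q, ((k : ℚ) * r - 1) / ((k : ℚ) * r)

noncomputable def Sq (r q : ℕ) : ℚ := ∑ t ∈ Finset.range (q + 1), Piq r t

noncomputable def Eaux (r n c : ℕ) : ℚ :=
  if 1 ≤ c ∧ c ≤ n % r then Sq r (n / r) else Sq r (n / r) - Piq r (n / r)

lemma Piq_zero (r : ℕ) : Piq r 0 = 1 := by simp [Piq]

lemma Piq_succ (r q : ℕ) :
    Piq r (q + 1) = Piq r q * ((((q : ℚ) + 1) * r - 1) / (((q : ℚ) + 1) * r)) := by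
  rw [Piq, Finset.prod_Icc_succ_top (by omega), ← Piq]
  push_cast
  ring

lemma Sq_succ (r q : ℕ) : Sq r (q + 1) = Sq r q + Piq r (q + 1) :=
  Finset.sum_range_succ _ _

lemma Sq_zero (r : ℕ) : Sq r 0 = 1 := by simp [Sq, Piq_zero]

lemma Piq_rel {r : ℕ} (hr : 2 ≤ r) (q : ℕ) :
    Piq r (q + 1) * (((q : ℚ) + 1) * r) = Piq r q * (((q : ℚ) + 1) * r - 1) := by
  have hne : ((q : ℚ) + 1) * r ≠ 0 := by positivity
  rw [Piq_succ, mul_assoc, div_mul_cancel₀ _ hne]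

lemma key_id {r : ℕ} (hr : 2 ≤ r) (q : ℕ) :
    ((r : ℚ) - 1) * Sq r q = (((q : ℚ) + 1) * r - 1) * Piq r q := by
  induction q with
  | zero => rw [Sq_zero, Piq_zero]; push_cast; ring
  | succ q ih =>
      have hrel := Piq_rel hr q
      rw [Sq_succ, mul_add, ih]
      push_cast at *
      linear_combination -hrel
lemma cshift {r c : ℕ} (hr : 2 ≤ r) (hc : c < r) :
    (c + r - 1) % r = if c = 0 then r - 1 else c - 1 := by
  by_cases h0 : c = 0
  · rw [if_pos h0, h0, Nat.mod_eq_of_lt (show 0 + r - 1 < r by omega)]; omega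
  · rw [if_neg h0, Nat.mod_eq_sub_mod (by omega),
      show c + r - 1 - r = c - 1 by omega, Nat.mod_eq_of_lt (show c - 1 < r by omega)]

lemma succ_div_mod {r : ℕ} (hr : 2 ≤ r) (n : ℕ) :
    (n % r + 1 < r ∧ (n+1) / r = n / r ∧ (n+1) % r = n % r + 1) ∨
      (n % r + 1 = r ∧ (n+1) / r = n / r + 1 ∧ (n+1) % r = 0) := by
  have h0 : 0 < r := by omega
  have hmodlt : n % r < r := Nat.mod_lt _ h0
  have hn : n = n % r + r * (n / r) := by have := Nat.div_add_mod n r; omega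
  by_cases hcase : n % r + 1 < r
  · left
    refine ⟨hcase, ?_, ?_⟩
    · conv_lhs => rw [show n + 1 = n % r + 1 + r * (n / r) by omega]
      rw [Nat.add_mul_div_left _ _ h0, Nat.div_eq_of_lt hcase, zero_add]
    · conv_lhs => rw [show n + 1 = n % r + 1 + r * (n / r) by omega]
      rw [Nat.add_mul_mod_self_left, Nat.mod_eq_of_lt hcase]
  · right
    have heq : n % r + 1 = r := by omega
    refine ⟨heq, ?_, ?_⟩
    · conv_lhs => rw [show n + 1 = r + r * (n / r) by omega]
      rw [Nat.add_mul_div_left _ _ h0, Nat.div_self h0]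
      omega
    · conv_lhs => rw [show n + 1 = r + r * (n / r) by omega]
      rw [Nat.add_mul_mod_self_left, Nat.mod_self]

lemma Eaux_succ {r c : ℕ} (hr : 2 ≤ r) (hc : c < r) (n : ℕ) :
    Eaux r (n+1) c = Eaux r n ((c + r - 1) % r) + if c = 1 then Piq r (n / r) else 0 := by
  rw [cshift hr hc]
  rcases succ_div_mod hr n with ⟨hlt, hdiv, hmod⟩ | ⟨heq, hdiv, hmod⟩
  · simp only [Eaux, hdiv, hmod]
    split_ifs <;> first | omega | ring
  · simp only [Eaux, hdiv, hmod, Sq_succ]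
    split_ifs <;> first | omega | ring

lemma sum_Eaux {r : ℕ} (hr : 2 ≤ r) (n : ℕ) :
    ∑ c ∈ Finset.range (r-1), Eaux r n c =
      ((r : ℚ) - 1) * (Sq r (n / r) - Piq r (n / r)) +
        ((min (n % r) (r-2) : ℕ) : ℚ) * Piq r (n / r) := by
  have hsplit : ∀ c, Eaux r n c =
      (Sq r (n / r) - Piq r (n / r)) +
        (if 1 ≤ c ∧ c ≤ n % r then Piq r (n / r) else 0) := by
    intro c
    rw [Eaux]
    split_ifs <;> ring
  rw [Finset.sum_congr rfl fun c _ => hsplit c, Finset.sum_add_distrib, Finset.sum_const,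
    Finset.sum_ite, Finset.sum_const_zero, Finset.sum_const, add_zero]
  have hfil : Finset.filter (fun c => 1 ≤ c ∧ c ≤ n % r) (Finset.range (r-1)) =
      Finset.Icc 1 (min (n % r) (r - 2)) := by
    ext a
    simp only [Finset.mem_filter, Finset.mem_range, Finset.mem_Icc]
    omega
  rw [hfil, Finset.card_range, Nat.card_Icc]
  rw [nsmul_eq_mul, nsmul_eq_mul]
  have h1 : ((r - 1 : ℕ) : ℚ) = (r : ℚ) - 1 := by
    rw [Nat.cast_sub (show 1 ≤ r by omega)]; norm_num
  have h2 : min (n % r) (r-2) + 1 - 1 = min (n % r) (r-2) := by omega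
  rw [h2, h1]
lemma main_eq {r : ℕ} (hr : 2 ≤ r) (n : ℕ) :
    ((Areg r n : ℚ) = (n.factorial : ℚ) * Piq r (n / r)) ∧
      ∀ c, c < r → (Greg r n c : ℚ) = (n.factorial : ℚ) * Eaux r n c := by
  induction n with
  | zero =>
      constructor
      · rw [Areg_zero]
        simp [Piq_zero]
      · intro c hc
        rw [Greg_zero, Eaux]
        rw [Nat.zero_mod, if_neg (by omega), Nat.zero_div, Sq_zero, Piq_zero]
        simp
  | succ n ih =>
      obtain ⟨ihA, ihG⟩ := ih
      have h0 : 0 < r := by omega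
      have hn : n = n % r + r * (n / r) := by have := Nat.div_add_mod n r; omega
      have hnc : (n : ℚ) = (n % r : ℕ) + (r : ℚ) * ((n / r : ℕ) : ℚ) := by
        exact_mod_cast congrArg (Nat.cast : ℕ → ℚ) hn
      constructor
      · -- A part
        rw [Areg_succ hr n, B_eq hr n]
        push_cast
        rw [ihA, Finset.sum_congr rfl
          (fun c hc => ihG c (by rw [Finset.mem_range] at hc; omega)),
          ← Finset.mul_sum, sum_Eaux hr n, Nat.factorial_succ]
        have hKI := key_id hr (n / r)
        rcases succ_div_mod hr n with ⟨hlt, hdiv, hmod⟩ | ⟨heq, hdiv, hmod⟩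
        · rw [hdiv]
          have hmin : min (n % r) (r-2) = n % r := by omega
          rw [hmin]
          push_cast
          linear_combination ((n.factorial : ℚ)) * hKI -
            (n.factorial : ℚ) * Piq r (n / r) * hnc
        · rw [hdiv]
          have hmin : min (n % r) (r-2) = r - 2 := by omega
          rw [hmin]
          have hrel := Piq_rel hr (n / r)
          have hc2 : ((r - 2 : ℕ) : ℚ) = (r : ℚ) - 2 := by
            rw [Nat.cast_sub (show 2 ≤ r by omega)]; norm_num
          have hmc : ((n % r : ℕ) : ℚ) = (r : ℚ) - 1 := by
            have : n % r = r - 1 := by omega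
            rw [this, Nat.cast_sub (show 1 ≤ r by omega)]; norm_num
          rw [hc2]
          push_cast
          linear_combination ((n.factorial : ℚ)) * hKI -
            ((n.factorial : ℚ)) * hrel -
            (n.factorial : ℚ) * Piq r (n / r + 1) * hnc -
            (n.factorial : ℚ) * Piq r (n / r + 1) * hmc
      · -- G part
        intro c hc
        rw [Greg_succ hr hc n, Eaux_succ hr hc n]
        have hcm : (c + r - 1) % r < r := Nat.mod_lt _ h0
        push_cast
        rw [ihG _ hcm, ihA, Nat.factorial_succ]
        by_cases h1 : c = 1
        · rw [if_pos h1, if_pos h1]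
          push_cast
          ring
        · rw [if_neg h1, if_neg h1]
          push_cast
          ring

/-- |Reg_r(rm)| · r^m · m! = (rm)! · (r-1)(2r-1)⋯(mr-1). -/
theorem stmt0 (r m : ℕ) (hr : 2 ≤ r) (hm : 1 ≤ m) :
    Nat.card {σ : Equiv.Perm (Fin (r * m)) //
        ∀ x, ¬ r ∣ Function.minimalPeriod ⇑σ x} * (r ^ m * Nat.factorial m) =
      Nat.factorial (r * m) * ∏ k ∈ Finset.Icc 1 m, (k * r - 1) := by
  show Areg r (r * m) * (r ^ m * Nat.factorial m) = _
  have hA := (main_eq hr (r * m)).1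
  have hdiv : (r * m) / r = m := Nat.mul_div_cancel_left _ (by omega)
  rw [hdiv] at hA
  have hden : ∏ k ∈ Finset.Icc 1 m, ((k : ℚ) * r) = (m.factorial : ℚ) * (r : ℚ)^m := by
    rw [Finset.prod_mul_distrib, Finset.prod_const, Nat.card_Icc,
      show m + 1 - 1 = m from rfl]
    congr 1
    rw [show Finset.Icc 1 m = Finset.Ico 1 (m+1) from (Finset.Ico_add_one_right_eq_Icc 1 m).symm]
    rw [← Nat.cast_prod]
    rw [Finset.prod_Ico_id_eq_factorial]
  have hdne : (m.factorial : ℚ) * (r : ℚ)^m ≠ 0 := by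
    have h1 : (m.factorial : ℚ) ≠ 0 := by
      exact_mod_cast m.factorial_pos.ne'
    have h2 : (r : ℚ) ≠ 0 := by
      have : 0 < r := by omega
      exact_mod_cast this.ne'
    exact mul_ne_zero h1 (pow_ne_zero _ h2)
  have hprod : Piq r m * ((r : ℚ)^m * (m.factorial : ℚ)) =
      ∏ k ∈ Finset.Icc 1 m, ((k : ℚ) * r - 1) := by
    rw [Piq, Finset.prod_div_distrib, hden,
      show ((r:ℚ)^m * (m.factorial : ℚ)) = (m.factorial : ℚ) * (r:ℚ)^m from by ring,
      div_mul_cancel₀ _ hdne]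
  have hcast : ((∏ k ∈ Finset.Icc 1 m, (k * r - 1) : ℕ) : ℚ) =
      ∏ k ∈ Finset.Icc 1 m, ((k : ℚ) * r - 1) := by
    rw [Nat.cast_prod]
    refine Finset.prod_congr rfl fun k hk => ?_
    rw [Finset.mem_Icc] at hk
    have h1 : 1 ≤ k * r := by
      calc 1 = 1 * 1 := by ring
      _ ≤ k * r := Nat.mul_le_mul hk.1 (by omega)
    rw [Nat.cast_sub h1]
    push_cast
    ring
  have hfinal : ((Areg r (r * m) * (r ^ m * Nat.factorial m) : ℕ) : ℚ) =
      ((Nat.factorial (r * m) * ∏ k ∈ Finset.Icc 1 m, (k * r - 1) : ℕ) : ℚ) := by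
    push_cast [hA, hcast]
    rw [mul_assoc, mul_comm ((r:ℚ)^m) ((m.factorial : ℚ))]
    rw [show Piq r m * ((m.factorial : ℚ) * (r:ℚ)^m) =
      Piq r m * ((r:ℚ)^m * (m.factorial : ℚ)) by ring, hprod]
  exact Nat.cast_injective hfinal
end

section
/- For integers r ≥ 2 and m ≥ 1, the number of permutations of {1,...,rm} all of whose cycle lengths are divisible by r equals (rm)! · (1+r)(1+2r)⋯(1+(m-1)r) / (r^m · m!). -/
namespace Stmt1Aux

open Equiv Equiv.Perm Function Finset

variable {α β : Type*}

lemma mem_periodicPts [Finite α] (σ : Perm α) (x : α) : x ∈ periodicPts ⇑σ :=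
  ⟨orderOf σ, orderOf_pos σ, by
    show (⇑σ)^[orderOf σ] x = x
    rw [Equiv.Perm.iterate_eq_pow, pow_orderOf_eq_one]; rfl⟩

lemma minPeriod_pos [Finite α] (σ : Perm α) (x : α) : 0 < minimalPeriod ⇑σ x :=
  minimalPeriod_pos_of_mem_periodicPts (mem_periodicPts σ x)

lemma pow_apply_of_comm {σ : Perm β} {e : Perm α} {g : α → β}
    (h : ∀ x, σ (g x) = g (e x)) : ∀ (k : ℕ) (x : α), (σ ^ k) (g x) = g ((e ^ k) x) := by
  intro k
  induction k with
  | zero => simp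
  | succ k ih =>
    intro x
    rw [pow_succ', pow_succ', Perm.mul_apply, Perm.mul_apply, ih, h]

lemma minimalPeriod_transfer {g : α → β} (hg : Injective g) {σ : Perm β} {e : Perm α} {a : α}
    (h : ∀ k : ℕ, (σ ^ k) (g a) = g ((e ^ k) a)) :
    minimalPeriod ⇑σ (g a) = minimalPeriod ⇑e a := by
  rw [minimalPeriod_eq_minimalPeriod_iff]
  intro n
  show (⇑σ)^[n] (g a) = g a ↔ (⇑e)^[n] a = a
  rw [Equiv.Perm.iterate_eq_pow, Equiv.Perm.iterate_eq_pow, h n, hg.eq_iff]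

lemma sameCycle_iff_nat [Finite α] {e : Perm α} {x y : α} :
    e.SameCycle x y ↔ ∃ k : ℕ, (e ^ k) x = y := by
  constructor
  · intro h
    obtain ⟨i, _, hi⟩ := h.exists_pow_eq'
    exact ⟨i, hi⟩
  · rintro ⟨k, hk⟩
    exact ⟨(k : ℤ), by rw [zpow_natCast]; exact hk⟩

lemma sameCycle_of_comm [Finite α] [Finite β] {σ : Perm β} {e : Perm α} {g : α → β}
    (hg : Injective g) (h : ∀ x, σ (g x) = g (e x)) (x y : α) :
    σ.SameCycle (g x) (g y) ↔ e.SameCycle x y := by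
  rw [sameCycle_iff_nat, sameCycle_iff_nat]
  constructor
  · rintro ⟨k, hk⟩
    rw [pow_apply_of_comm h] at hk
    exact ⟨k, hg hk⟩
  · rintro ⟨k, hk⟩
    exact ⟨k, by rw [pow_apply_of_comm h, hk]⟩

lemma minimalPeriod_eq_of_sameCycle [Finite α] {e : Perm α} {x y : α} (h : e.SameCycle x y) :
    minimalPeriod ⇑e y = minimalPeriod ⇑e x := by
  rw [sameCycle_iff_nat] at h
  obtain ⟨k, rfl⟩ := h
  show minimalPeriod ⇑e ((⇑e)^[k] x) = minimalPeriod ⇑e x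
  exact minimalPeriod_apply_iterate (mem_periodicPts e x) k


open Equiv Equiv.Perm Function Finset

variable {n : ℕ}

/-! ### Case p = 0 -/

lemma s0_zero (e : Perm (Fin (n + 1))) :
    (Equiv.Perm.decomposeFin.symm (0, e) : Perm (Fin (n + 2))) 0 = 0 :=
  Equiv.Perm.decomposeFin_symm_apply_zero 0 e

lemma s0_succ (e : Perm (Fin (n + 1))) (x : Fin (n + 1)) :
    (Equiv.Perm.decomposeFin.symm (0, e) : Perm (Fin (n + 2))) x.succ = (e x).succ := by
  rw [Equiv.Perm.decomposeFin_symm_apply_succ, Equiv.swap_self]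
  rfl

lemma s0_minPeriod_zero (e : Perm (Fin (n + 1))) :
    minimalPeriod ⇑(Equiv.Perm.decomposeFin.symm (0, e) : Perm (Fin (n + 2))) 0 = 1 :=
  minimalPeriod_eq_one_iff_isFixedPt.mpr (s0_zero e)

lemma s0_minPeriod_succ (e : Perm (Fin (n + 1))) (x : Fin (n + 1)) :
    minimalPeriod ⇑(Equiv.Perm.decomposeFin.symm (0, e) : Perm (Fin (n + 2))) x.succ =
      minimalPeriod ⇑e x :=
  minimalPeriod_transfer (Fin.succ_injective _)
    (fun k => pow_apply_of_comm (s0_succ e) k x)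

lemma s0_not_sameCycle (e : Perm (Fin (n + 1))) (x : Fin (n + 1)) :
    ¬ (Equiv.Perm.decomposeFin.symm (0, e) : Perm (Fin (n + 2))).SameCycle 0 x.succ := by
  have hfix : ∀ k : ℕ, ((Equiv.Perm.decomposeFin.symm (0, e) : Perm (Fin (n + 2))) ^ k) 0 = 0 := by
    intro k
    induction k with
    | zero => rfl
    | succ k ih => rw [pow_succ, Perm.mul_apply, s0_zero, ih]
  rw [sameCycle_iff_nat]
  rintro ⟨k, hk⟩
  rw [hfix] at hk
  exact (Fin.succ_ne_zero x) hk.symm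

/-! ### Case p = q.succ -/

lemma s1_zero (q : Fin (n + 1)) (e : Perm (Fin (n + 1))) :
    (Equiv.Perm.decomposeFin.symm (q.succ, e) : Perm (Fin (n + 2))) 0 = q.succ :=
  Equiv.Perm.decomposeFin_symm_apply_zero q.succ e

lemma s1_succ (q : Fin (n + 1)) (e : Perm (Fin (n + 1))) (x : Fin (n + 1)) :
    (Equiv.Perm.decomposeFin.symm (q.succ, e) : Perm (Fin (n + 2))) x.succ =
      if e x = q then 0 else (e x).succ := by
  rw [Equiv.Perm.decomposeFin_symm_apply_succ]
  by_cases h : e x = q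
  · rw [if_pos h, h, Equiv.swap_apply_right]
  · rw [if_neg h]
    exact Equiv.swap_apply_of_ne_of_ne (Fin.succ_ne_zero _)
      (fun hc => h (Fin.succ_injective _ hc))

lemma s1_pow_zero (q : Fin (n + 1)) (e : Perm (Fin (n + 1))) :
    ∀ k : ℕ, k < minimalPeriod ⇑e q →
      ((Equiv.Perm.decomposeFin.symm (q.succ, e) : Perm (Fin (n + 2))) ^ (k + 1)) 0 =
        ((e ^ k) q).succ := by
  intro k
  induction k with
  | zero =>
    intro _
    rw [pow_one, s1_zero, pow_zero]
    rfl
  | succ k ih =>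
    intro hk
    have hk' : k < minimalPeriod ⇑e q := Nat.lt_of_succ_lt hk
    rw [pow_succ', Perm.mul_apply, ih hk', s1_succ]
    have hne : e ((e ^ k) q) = (e ^ (k + 1)) q := by
      rw [pow_succ', Perm.mul_apply]
    rw [hne]
    have hnq : (e ^ (k + 1)) q ≠ q := by
      intro hc
      exact not_isPeriodicPt_of_pos_of_lt_minimalPeriod (Nat.succ_ne_zero k) hk
        (show (⇑e)^[k+1] q = q from hc)
    rw [if_neg hnq]

lemma s1_pow_zero_top (q : Fin (n + 1)) (e : Perm (Fin (n + 1))) :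
    ((Equiv.Perm.decomposeFin.symm (q.succ, e) : Perm (Fin (n + 2))) ^
        (minimalPeriod ⇑e q + 1)) 0 = 0 := by
  have hL : 0 < minimalPeriod ⇑e q := minPeriod_pos e q
  obtain ⟨k, hk⟩ : ∃ k, minimalPeriod ⇑e q = k + 1 := ⟨_, (Nat.succ_pred_eq_of_pos hL).symm⟩
  rw [hk, pow_succ', Perm.mul_apply, s1_pow_zero q e k (by omega), s1_succ]
  have : e ((e ^ k) q) = (e ^ (k + 1)) q := by rw [pow_succ', Perm.mul_apply]
  rw [this, ← hk]
  have hper : (e ^ minimalPeriod ⇑e q) q = q := isPeriodicPt_minimalPeriod ⇑e q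
  rw [if_pos hper]

lemma s1_minPeriod_zero (q : Fin (n + 1)) (e : Perm (Fin (n + 1))) :
    minimalPeriod ⇑(Equiv.Perm.decomposeFin.symm (q.succ, e) : Perm (Fin (n + 2))) 0 =
      minimalPeriod ⇑e q + 1 := by
  set σ := (Equiv.Perm.decomposeFin.symm (q.succ, e) : Perm (Fin (n + 2))) with hσ
  set L := minimalPeriod ⇑e q with hLdef
  have h1 : IsPeriodicPt ⇑σ (L + 1) 0 := by
    show (⇑σ)^[L+1] 0 = 0
    rw [Equiv.Perm.iterate_eq_pow]
    exact s1_pow_zero_top q e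
  refine le_antisymm (h1.minimalPeriod_le (Nat.succ_pos L)) ?_
  by_contra hlt
  push_neg at hlt
  have hM : 0 < minimalPeriod ⇑σ 0 := minPeriod_pos σ 0
  obtain ⟨k, hk⟩ : ∃ k, minimalPeriod ⇑σ 0 = k + 1 :=
    ⟨_, (Nat.succ_pred_eq_of_pos hM).symm⟩
  have hper : (σ ^ minimalPeriod ⇑σ 0) 0 = 0 := isPeriodicPt_minimalPeriod ⇑σ 0
  rw [hk] at hper
  rw [s1_pow_zero q e k (by omega)] at hper
  exact Fin.succ_ne_zero _ hper

lemma s1_sameCycle_zero (q : Fin (n + 1)) (e : Perm (Fin (n + 1))) (y : Fin (n + 1)) :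
    (Equiv.Perm.decomposeFin.symm (q.succ, e) : Perm (Fin (n + 2))).SameCycle 0 y.succ ↔
      e.SameCycle q y := by
  set σ := (Equiv.Perm.decomposeFin.symm (q.succ, e) : Perm (Fin (n + 2))) with hσ
  set L := minimalPeriod ⇑e q with hLdef
  have hL : 0 < L := minPeriod_pos e q
  rw [sameCycle_iff_nat, sameCycle_iff_nat]
  constructor
  · rintro ⟨k, hk⟩
    have hmod : (σ ^ (k % (L + 1))) 0 = (σ ^ k) 0 := by
      show (⇑σ)^[k % (L+1)] 0 = (⇑σ)^[k] 0
      rw [← s1_minPeriod_zero q e]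
      exact iterate_mod_minimalPeriod_eq
    rw [← hmod] at hk
    rcases Nat.eq_zero_or_pos (k % (L + 1)) with h0 | hpos
    · rw [h0, pow_zero] at hk
      exact absurd hk (by exact fun hc => Fin.succ_ne_zero y (by exact hc.symm ▸ rfl))
    · obtain ⟨i, hi⟩ : ∃ i, k % (L + 1) = i + 1 := ⟨_, (Nat.succ_pred_eq_of_pos hpos).symm⟩
      have hiL : i < L := by
        have h2 : k % (L + 1) < L + 1 := Nat.mod_lt _ (by omega)
        omega
      rw [hi, s1_pow_zero q e i hiL] at hk
      exact ⟨i, Fin.succ_injective _ hk⟩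
  · rintro ⟨k, hk⟩
    have hmod : (e ^ (k % L)) q = (e ^ k) q := by
      show (⇑e)^[k % L] q = (⇑e)^[k] q
      exact iterate_mod_minimalPeriod_eq
    refine ⟨k % L + 1, ?_⟩
    rw [s1_pow_zero q e (k % L) (Nat.mod_lt k hL), hmod, hk]

lemma s1_pow_succ (q : Fin (n + 1)) (e : Perm (Fin (n + 1))) {y : Fin (n + 1)}
    (hy : ¬ e.SameCycle q y) :
    ∀ k : ℕ, ((Equiv.Perm.decomposeFin.symm (q.succ, e) : Perm (Fin (n + 2))) ^ k) y.succ =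
      ((e ^ k) y).succ := by
  intro k
  induction k with
  | zero => rfl
  | succ k ih =>
    rw [pow_succ', Perm.mul_apply, ih, s1_succ]
    have hne : e ((e ^ k) y) ≠ q := by
      intro hc
      refine hy (Equiv.Perm.SameCycle.symm ⟨(k + 1 : ℕ), ?_⟩)
      rw [zpow_natCast, pow_succ', Perm.mul_apply]
      exact hc
    rw [if_neg hne, pow_succ', Perm.mul_apply]

lemma s1_minPeriod_succ (q : Fin (n + 1)) (e : Perm (Fin (n + 1))) {y : Fin (n + 1)}
    (hy : ¬ e.SameCycle q y) :
    minimalPeriod ⇑(Equiv.Perm.decomposeFin.symm (q.succ, e) : Perm (Fin (n + 2))) y.succ =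
      minimalPeriod ⇑e y :=
  minimalPeriod_transfer (Fin.succ_injective _) (fun k => s1_pow_succ q e hy k)


open Equiv Equiv.Perm Function Finset

def PP (r : ℕ) {α : Type*} (σ : Perm α) : Prop := ∀ x : α, r ∣ minimalPeriod ⇑σ x

def QQ (r j : ℕ) {α : Type*} (a : α) (σ : Perm α) : Prop :=
  minimalPeriod ⇑σ a % r = j ∧ ∀ x, ¬ σ.SameCycle a x → r ∣ minimalPeriod ⇑σ x

noncomputable def NN (r n : ℕ) : ℕ := Nat.card {σ : Perm (Fin n) // PP r σ}

noncomputable def G (r j n : ℕ) : ℕ := Nat.card {σ : Perm (Fin (n + 1)) // QQ r j 0 σ}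

lemma natCard_sigma {ι : Type*} [Fintype ι] (f : ι → Type*) [∀ i, Finite (f i)] :
    Nat.card (Σ i, f i) = ∑ i, Nat.card (f i) := by
  letI : ∀ i, Fintype (f i) := fun i => Fintype.ofFinite _
  simp [Nat.card_eq_fintype_card, Fintype.card_sigma]

lemma NN_succ_eq_G {r : ℕ} (hr : 0 < r) (n : ℕ) : NN r (n + 1) = G r 0 n := by
  apply Nat.card_congr
  apply Equiv.subtypeEquivRight
  intro σ
  constructor
  · intro h
    exact ⟨Nat.mod_eq_zero_of_dvd (h 0), fun x _ => h x⟩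
  · rintro ⟨h1, h2⟩ x
    by_cases hsc : σ.SameCycle 0 x
    · rw [minimalPeriod_eq_of_sameCycle hsc]
      exact Nat.dvd_of_mod_eq_zero h1
    · exact h2 x hsc

/-- Conjugation symmetry. -/
lemma card_QQ_eq (r j n : ℕ) (a : Fin (n + 1)) :
    Nat.card {σ : Perm (Fin (n + 1)) // QQ r j a σ} =
      Nat.card {σ : Perm (Fin (n + 1)) // QQ r j 0 σ} := by
  set c : Perm (Fin (n + 1)) := Equiv.swap 0 a with hc
  apply Nat.card_congr
  refine Equiv.subtypeEquiv (MulAut.conj c).toEquiv (fun e => ?_)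
  show QQ r j a e ↔ QQ r j 0 ((MulAut.conj c) e)
  have happ : ∀ x, ((MulAut.conj c) e) (c x) = c (e x) := by
    intro x
    simp [MulAut.conj_apply, Perm.mul_apply]
  have hper : ∀ x, minimalPeriod ⇑((MulAut.conj c) e) (c x) = minimalPeriod ⇑e x :=
    fun x => minimalPeriod_transfer c.injective (fun k => pow_apply_of_comm happ k x)
  have hsc : ∀ x y, ((MulAut.conj c) e).SameCycle (c x) (c y) ↔ e.SameCycle x y :=
    sameCycle_of_comm c.injective happ
  have hca : c a = 0 := Equiv.swap_apply_right 0 a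
  constructor
  · rintro ⟨h1, h2⟩
    constructor
    · rw [show (0 : Fin (n + 1)) = c a from hca.symm, hper]
      exact h1
    · intro x hx
      obtain ⟨y, rfl⟩ := c.surjective x
      rw [hper]
      refine h2 y (fun hsc' => hx ?_)
      rw [show (0 : Fin (n + 1)) = c a from hca.symm, hsc]
      exact hsc'
  · rintro ⟨h1, h2⟩
    constructor
    · rw [← hper a, hca]
      exact h1
    · intro y hy
      rw [← hper y]
      refine h2 (c y) (fun hsc' => hy ?_)
      rw [← hca, hsc] at hsc'
      exact hsc'

lemma cond_zero {r j n : ℕ} (e : Perm (Fin (n + 1))) :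
    QQ r j (0 : Fin (n + 2)) (Equiv.Perm.decomposeFin.symm (0, e)) ↔ (1 % r = j ∧ PP r e) := by
  constructor
  · rintro ⟨h1, h2⟩
    rw [s0_minPeriod_zero] at h1
    refine ⟨h1, fun y => ?_⟩
    have := h2 y.succ (s0_not_sameCycle e y)
    rwa [s0_minPeriod_succ] at this
  · rintro ⟨h1, h2⟩
    refine ⟨by rw [s0_minPeriod_zero]; exact h1, fun x hx => ?_⟩
    induction x using Fin.cases with
    | zero => exact absurd (Equiv.Perm.SameCycle.refl _ _) hx
    | succ y => rw [s0_minPeriod_succ]; exact h2 y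

lemma cond_succ {r j n : ℕ} (q : Fin (n + 1)) (e : Perm (Fin (n + 1))) :
    QQ r j (0 : Fin (n + 2)) (Equiv.Perm.decomposeFin.symm (q.succ, e)) ↔
      ((minimalPeriod ⇑e q + 1) % r = j ∧
        ∀ y, ¬ e.SameCycle q y → r ∣ minimalPeriod ⇑e y) := by
  constructor
  · rintro ⟨h1, h2⟩
    rw [s1_minPeriod_zero] at h1
    refine ⟨h1, fun y hy => ?_⟩
    have := h2 y.succ (fun hc => hy ((s1_sameCycle_zero q e y).mp hc))
    rwa [s1_minPeriod_succ q e hy] at this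
  · rintro ⟨h1, h2⟩
    refine ⟨by rw [s1_minPeriod_zero]; exact h1, fun x hx => ?_⟩
    induction x using Fin.cases with
    | zero => exact absurd (Equiv.Perm.SameCycle.refl _ _) hx
    | succ y =>
      have hy : ¬ e.SameCycle q y := fun hc => hx ((s1_sameCycle_zero q e y).mpr hc)
      rw [s1_minPeriod_succ q e hy]
      exact h2 y hy

lemma mod_shift {r j : ℕ} (hr : 0 < r) (hj : j < r) (L : ℕ) :
    (L + 1) % r = j ↔ L % r = (j + r - 1) % r := by
  have e1 : ((L + 1) % r = j) ↔ (L + 1) ≡ j [MOD r] := by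
    rw [Nat.ModEq, Nat.mod_eq_of_lt hj]
  rw [e1]
  show _ ↔ L ≡ j + r - 1 [MOD r]
  constructor
  · intro h
    have h2 := h.add_right (r - 1)
    rw [show L + 1 + (r - 1) = L + r by omega, show j + (r - 1) = j + r - 1 by omega] at h2
    exact Nat.ModEq.trans (by unfold Nat.ModEq; rw [Nat.add_mod_right]) h2
  · intro h
    have h2 := h.add_right 1
    rw [show j + r - 1 + 1 = j + r by omega] at h2
    exact h2.trans (by unfold Nat.ModEq; rw [Nat.add_mod_right])

lemma G_succ {r : ℕ} (hr : 2 ≤ r) (n : ℕ) {j : ℕ} (hj : j < r) :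
    G r j (n + 1) =
      (if j = 1 then G r 0 n else 0) + (n + 1) * G r ((j + r - 1) % r) n := by
  have hr0 : 0 < r := by omega
  have step1 : G r j (n + 1) =
      ∑ p : Fin (n + 2),
        Nat.card {e : Perm (Fin (n + 1)) // QQ r j 0 (Equiv.Perm.decomposeFin.symm (p, e))} := by
    rw [G]
    have e1 : {σ : Perm (Fin (n + 2)) // QQ r j 0 σ} ≃
        Σ p : Fin (n + 2), {e : Perm (Fin (n + 1)) //
          QQ r j (0 : Fin (n + 2)) (Equiv.Perm.decomposeFin.symm (p, e))} :=
      (Equiv.subtypeEquiv (Equiv.Perm.decomposeFin)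
        (fun σ => iff_of_eq (congrArg (QQ r j 0)
          (Equiv.symm_apply_apply Equiv.Perm.decomposeFin σ).symm))).trans
      (Equiv.subtypeProdEquivSigmaSubtype
        (fun p e => QQ r j (0 : Fin (n + 2)) (Equiv.Perm.decomposeFin.symm (p, e))))
    rw [Nat.card_congr e1, natCard_sigma]
  rw [step1, Fin.sum_univ_succ]
  congr 1
  · -- p = 0 term
    by_cases hj1 : j = 1
    · rw [if_pos hj1]
      rw [← NN_succ_eq_G hr0]
      apply Nat.card_congr
      apply Equiv.subtypeEquivRight
      intro e
      rw [cond_zero]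
      have : 1 % r = 1 := Nat.mod_eq_of_lt hr
      constructor
      · rintro ⟨_, h⟩; exact h
      · intro h; exact ⟨by rw [this, hj1], h⟩
    · rw [if_neg hj1]
      have : IsEmpty {e : Perm (Fin (n + 1)) //
          QQ r j 0 (Equiv.Perm.decomposeFin.symm ((0 : Fin (n+2)), e))} := by
        refine ⟨fun ⟨e, he⟩ => ?_⟩
        rw [cond_zero] at he
        exact hj1 (by rw [← he.1, Nat.mod_eq_of_lt hr])
      exact Nat.card_of_isEmpty
  · -- succ terms
    have hterm : ∀ q : Fin (n + 1),
        Nat.card {e : Perm (Fin (n + 1)) //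
          QQ r j 0 (Equiv.Perm.decomposeFin.symm (q.succ, e))} =
        G r ((j + r - 1) % r) n := by
      intro q
      have : ∀ e : Perm (Fin (n + 1)),
          QQ r j (0 : Fin (n + 2)) (Equiv.Perm.decomposeFin.symm (q.succ, e)) ↔
            QQ r ((j + r - 1) % r) q e := by
        intro e
        rw [cond_succ]
        unfold QQ
        rw [mod_shift hr0 hj]
      rw [Nat.card_congr (Equiv.subtypeEquivRight this)]
      exact card_QQ_eq r _ n q
    rw [Finset.sum_congr rfl (fun q _ => hterm q)]
    rw [Finset.sum_const, Finset.card_univ, Fintype.card_fin, smul_eq_mul]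


open Equiv Equiv.Perm Function Finset

lemma G_zero {r j : ℕ} (hr : 2 ≤ r) : G r j 0 = if j = 1 then 1 else 0 := by
  have hQQ : ∀ σ : Perm (Fin 1), QQ r j 0 σ ↔ j = 1 := by
    intro σ
    have hσ : σ = 1 := Subsingleton.elim σ 1
    subst hσ
    constructor
    · rintro ⟨h1, _⟩
      rw [Equiv.Perm.coe_one, minimalPeriod_id, Nat.mod_eq_of_lt hr] at h1
      exact h1.symm
    · intro h
      refine ⟨?_, fun x hx => absurd ?_ hx⟩
      · rw [Equiv.Perm.coe_one, minimalPeriod_id, Nat.mod_eq_of_lt hr, h]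
      · rw [Subsingleton.elim x 0]
  by_cases h : j = 1
  · rw [if_pos h, G]
    have : Unique {σ : Perm (Fin 1) // QQ r j 0 σ} :=
      ⟨⟨⟨1, (hQQ 1).mpr h⟩⟩, fun x => Subtype.ext (Subsingleton.elim _ _)⟩
    exact Nat.card_unique
  · rw [if_neg h, G]
    have : IsEmpty {σ : Perm (Fin 1) // QQ r j 0 σ} :=
      ⟨fun ⟨σ, hσ⟩ => h ((hQQ σ).mp hσ)⟩
    exact Nat.card_of_isEmpty

/-- The solution sequence of the recursion. -/
def A (r : ℕ) : ℕ → ℕ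
  | 0 => 1
  | n + 1 => (n + 1) * A r n + if r ∣ (n + 1) then A r n else 0

lemma A_succ (r n : ℕ) :
    A r (n + 1) = (n + 1) * A r n + if r ∣ (n + 1) then A r n else 0 := rfl

lemma G_eq {r : ℕ} (hr : 2 ≤ r) :
    ∀ n, ∀ j < r, G r j n = if j = (n + 1) % r then A r n else 0 := by
  have hr0 : 0 < r := by omega
  intro n
  induction n with
  | zero =>
    intro j hj
    rw [G_zero hr, Nat.mod_eq_of_lt hr]
    rfl
  | succ n ih =>
    intro j hj
    have hj' : (j + r - 1) % r < r := Nat.mod_lt _ hr0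
    rw [G_succ hr n hj, ih 0 hr0, ih _ hj']
    have key : ((j + r - 1) % r = (n + 1) % r) ↔ (j = (n + 1 + 1) % r) := by
      constructor
      · intro h
        exact ((mod_shift hr0 hj (n + 1)).mpr h.symm).symm
      · intro h
        exact ((mod_shift hr0 hj (n + 1)).mp h.symm).symm
    have hdvd_iff : (0 = (n + 1) % r) ↔ r ∣ (n + 1) := by
      constructor
      · intro h; exact Nat.dvd_of_mod_eq_zero h.symm
      · intro h; exact (Nat.mod_eq_zero_of_dvd h).symm
    have hone : (n + 1 + 1) % r = 1 ↔ r ∣ (n + 1) := by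
      rw [mod_shift hr0 (by omega : 1 < r) (n + 1),
        show 1 + r - 1 = r by omega, Nat.mod_self]
      constructor
      · intro h; exact Nat.dvd_of_mod_eq_zero h
      · intro h; exact Nat.mod_eq_zero_of_dvd h
    by_cases hcase : j = (n + 1 + 1) % r
    · rw [if_pos hcase, if_pos (key.mpr hcase), A_succ]
      by_cases hdvd : r ∣ (n + 1)
      · have hj1 : j = 1 := hcase.trans (hone.mpr hdvd)
        rw [if_pos hj1, if_pos (hdvd_iff.mpr hdvd), if_pos hdvd]
        ring
      · have hj1 : j ≠ 1 := fun h => hdvd (hone.mp (h ▸ hcase.symm))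
        rw [if_neg hj1, if_neg hdvd]
        ring
    · rw [if_neg hcase, if_neg (fun h => hcase (key.mp h))]
      by_cases hj1 : j = 1
      · rw [if_pos hj1]
        have hne : ¬ (0 = (n + 1) % r) := fun h =>
          hcase (hj1.trans (hone.mpr (hdvd_iff.mp h)).symm)
        rw [if_neg hne]
        ring
      · rw [if_neg hj1]
        ring

lemma NN_eq_A {r m : ℕ} (hr : 2 ≤ r) (hm : 1 ≤ m) : NN r (r * m) = A r (r * m - 1) := by
  have h1 : 1 ≤ r * m := Nat.one_le_of_lt (by
    calc 1 < r := hr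
    _ ≤ r * m := Nat.le_mul_of_pos_right r hm)
  have h2 : r * m = (r * m - 1) + 1 := by omega
  rw [h2, NN_succ_eq_G (by omega : 0 < r), G_eq hr _ 0 (by omega)]
  rw [← h2]
  have : (r * m) % r = 0 := Nat.mul_mod_right r m
  rw [if_pos this.symm]

lemma A_of_lt {r : ℕ} : ∀ i, i < r → A r i = Nat.factorial i := by
  intro i
  induction i with
  | zero => intro _; rfl
  | succ i ih =>
    intro hi
    have hnd : ¬ r ∣ (i + 1) := fun h => by
      have := Nat.le_of_dvd (Nat.succ_pos i) h
      omega
    rw [A_succ, if_neg hnd, ih (by omega), Nat.factorial_succ]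
    ring

lemma A_prod {r m : ℕ} (hr : 2 ≤ r) (hm : 1 ≤ m) :
    ∀ i, i < r → A r (r * m + i) =
      (∏ t ∈ Finset.range i, (r * m + 1 + t)) * A r (r * m) := by
  intro i
  induction i with
  | zero =>
    intro _
    rw [Finset.prod_range_zero, one_mul, Nat.add_zero]
  | succ i ih =>
    intro hi
    have hnd : ¬ r ∣ (r * m + i + 1) := by
      intro h
      have h2 : r ∣ (i + 1) := (Nat.dvd_add_right (Dvd.intro m rfl)).mp (by
        have : r * m + (i + 1) = r * m + i + 1 := by ring
        rwa [this])
      have := Nat.le_of_dvd (Nat.succ_pos i) h2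
      omega
    rw [show r * m + (i + 1) = (r * m + i) + 1 by ring, A_succ, if_neg hnd,
      ih (by omega), Finset.prod_range_succ]
    ring

lemma A_mul_step {r m : ℕ} (hr : 2 ≤ r) (hm : 1 ≤ m) :
    A r (r * m) = (r * m + 1) * A r (r * m - 1) := by
  have h1 : 1 ≤ r * m := Nat.one_le_of_lt (by
    calc 1 < r := hr
    _ ≤ r * m := Nat.le_mul_of_pos_right r hm)
  have h2 : r * m = (r * m - 1) + 1 := by omega
  have hdvd : r ∣ ((r * m - 1) + 1) := by rw [← h2]; exact Dvd.intro m rfl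
  calc A r (r * m) = A r ((r * m - 1) + 1) := by rw [← h2]
    _ = ((r * m - 1) + 1) * A r (r * m - 1) + A r (r * m - 1) := by
        rw [A_succ, if_pos hdvd]
    _ = (r * m + 1) * A r (r * m - 1) := by rw [← h2]; ring

lemma fact_prod (a : ℕ) : ∀ b, Nat.factorial (a + b) =
    Nat.factorial a * ∏ t ∈ Finset.range b, (a + 1 + t) := by
  intro b
  induction b with
  | zero => simp
  | succ b ih =>
    rw [show a + (b + 1) = (a + b) + 1 by ring, Nat.factorial_succ, ih,
      Finset.prod_range_succ]
    ring

lemma main_aux {r : ℕ} (hr : 2 ≤ r) :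
    ∀ m, 1 ≤ m → A r (r * m - 1) * (r ^ m * Nat.factorial m) =
      Nat.factorial (r * m) * ∏ k ∈ Finset.range m, (1 + k * r) := by
  intro m
  induction m with
  | zero => omega
  | succ m ih =>
    intro _
    by_cases hm : 1 ≤ m
    case neg =>
      -- m = 0, so m + 1 = 1
      have hm0 : m = 0 := by omega
      subst hm0
      rw [show r * 1 = r by ring, A_of_lt (r - 1) (by omega)]
      simp only [Nat.zero_add, pow_one, Nat.factorial_one, Finset.prod_range_one,
        Nat.zero_mul, Nat.add_zero, Nat.mul_one]
      have h5 : r = (r - 1) + 1 := by omega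
      conv_rhs => rw [h5]
      rw [Nat.factorial_succ, ← h5]
      ring
    case pos =>
      have IH := ih hm
      -- key rewrites
      have e0 : r * (m + 1) - 1 = r * m + (r - 1) := by
        have : 1 ≤ r * m := Nat.one_le_of_lt (by
          calc 1 < r := hr
          _ ≤ r * m := Nat.le_mul_of_pos_right r hm)
        ring_nf
        omega
      have e1 : A r (r * (m + 1) - 1) =
          (∏ t ∈ Finset.range (r - 1), (r * m + 1 + t)) *
            ((r * m + 1) * A r (r * m - 1)) := by
        rw [e0, A_prod hr hm (r - 1) (by omega), A_mul_step hr hm]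
      have e2 : Nat.factorial (r * (m + 1)) =
          Nat.factorial (r * m) * (∏ t ∈ Finset.range (r - 1), (r * m + 1 + t)) *
            (r * (m + 1)) := by
        have h3 : r * (m + 1) = r * m + r := by ring
        have h4 : r = (r - 1) + 1 := by omega
        calc Nat.factorial (r * (m + 1)) = Nat.factorial (r * m + r) := by rw [h3]
          _ = Nat.factorial (r * m) * ∏ t ∈ Finset.range r, (r * m + 1 + t) :=
              fact_prod (r * m) r
          _ = Nat.factorial (r * m) * ((∏ t ∈ Finset.range (r - 1), (r * m + 1 + t)) *
              (r * m + 1 + (r - 1))) := by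
                have hsplit : ∀ a : ℕ, ∏ t ∈ Finset.range r, (a + 1 + t) =
                    (∏ t ∈ Finset.range (r - 1), (a + 1 + t)) * (a + 1 + (r - 1)) := by
                  intro a
                  conv_lhs => rw [h4]
                  rw [Finset.prod_range_succ]
                rw [hsplit (r * m)]
          _ = _ := by
                have h5 : r * m + 1 + (r - 1) = r * (m + 1) := by omega
                rw [h5]; ring
      rw [e1, e2, Finset.prod_range_succ]
      have e3 : r ^ (m + 1) = r ^ m * r := pow_succ r m
      have e4 : Nat.factorial (m + 1) = (m + 1) * Nat.factorial m := Nat.factorial_succ m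
      rw [e3, e4]
      calc (∏ t ∈ Finset.range (r - 1), (r * m + 1 + t)) * ((r * m + 1) * A r (r * m - 1)) *
            (r ^ m * r * ((m + 1) * Nat.factorial m))
          = (∏ t ∈ Finset.range (r - 1), (r * m + 1 + t)) * (r * m + 1) * (r * (m + 1)) *
            (A r (r * m - 1) * (r ^ m * Nat.factorial m)) := by ring
        _ = (∏ t ∈ Finset.range (r - 1), (r * m + 1 + t)) * (r * m + 1) * (r * (m + 1)) *
            (Nat.factorial (r * m) * ∏ k ∈ Finset.range m, (1 + k * r)) := by rw [IH]
        _ = Nat.factorial (r * m) * (∏ t ∈ Finset.range (r - 1), (r * m + 1 + t)) *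
            (r * (m + 1)) * ((∏ k ∈ Finset.range m, (1 + k * r)) * (1 + m * r)) := by
              have : (1 + m * r) = r * m + 1 := by ring
              rw [this]; ring

end Stmt1Aux

/-- |Cyc_r(rm)| · r^m · m! = (rm)! · (1+r)(1+2r)⋯(1+(m-1)r). -/
theorem stmt1 (r m : ℕ) (hr : 2 ≤ r) (hm : 1 ≤ m) :
    Nat.card {σ : Equiv.Perm (Fin (r * m)) //
        ∀ x, r ∣ Function.minimalPeriod ⇑σ x} * (r ^ m * Nat.factorial m) =
      Nat.factorial (r * m) * ∏ k ∈ Finset.range m, (1 + k * r) := by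
  have h1 : Nat.card {σ : Equiv.Perm (Fin (r * m)) //
      ∀ x, r ∣ Function.minimalPeriod ⇑σ x} = Stmt1Aux.NN r (r * m) := rfl
  rw [h1, Stmt1Aux.NN_eq_A hr hm, Stmt1Aux.main_aux hr m hm]
end

section
/- For integers n ≥ 0, r ≥ 2, k ≥ 1 with n - k not divisible by r, the number of permutations of {1,...,n} in which the cycle containing 1 has length k and all other cycles have length not divisible by r equals the number of permutations of {1,...,n} in which the cycle containing 1 has length k+1 and all other cycles have length not divisible by r. -/
open Equiv Function

/-- Permutations in which the cycle containing `x` has length `k` and every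
other cycle has length not divisible by `r`. -/
def QProp (r k : ℕ) {α : Type*} (x : α) (σ : Equiv.Perm α) : Prop :=
  Function.minimalPeriod ⇑σ x = k ∧
    ∀ y : α, (∀ i : ℕ, (σ ^ i) x ≠ y) → ¬ r ∣ Function.minimalPeriod ⇑σ y

namespace Stmt4Aux

variable {α : Type*} {β : Type*}

lemma perm_mem_periodicPts [Finite α] (σ : Equiv.Perm α) (x : α) :
    x ∈ periodicPts ⇑σ := by
  refine mk_mem_periodicPts (n := orderOf σ) (orderOf_pos σ) ?_
  show (⇑σ)^[orderOf σ] x = x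
  rw [← Equiv.Perm.coe_pow, pow_orderOf_eq_one]; rfl

lemma mp_pos [Finite α] (σ : Equiv.Perm α) (x : α) :
    0 < minimalPeriod ⇑σ x :=
  minimalPeriod_pos_of_mem_periodicPts (perm_mem_periodicPts σ x)

lemma pow_apply (σ : Equiv.Perm α) (i : ℕ) (x : α) : (σ ^ i) x = (⇑σ)^[i] x := by
  rw [Equiv.Perm.coe_pow]

/-- transfer of minimal period along a semiconjugacy by an injective map -/
lemma minimalPeriod_semiconj {f : α → α} {g : β → β} {e : α → β} (he : Injective e)
    (hsc : ∀ a, g (e a) = e (f a)) (x : α) :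
    minimalPeriod g (e x) = minimalPeriod f x := by
  have hit : ∀ n a, g^[n] (e a) = e (f^[n] a) := by
    intro n
    induction n with
    | zero => intro a; rfl
    | succ n ih => intro a; rw [iterate_succ_apply, iterate_succ_apply, hsc, ih]
  have hiff : ∀ n, IsPeriodicPt g n (e x) ↔ IsPeriodicPt f n x := by
    intro n
    unfold IsPeriodicPt IsFixedPt
    rw [hit]
    exact ⟨fun h => he h, fun h => by rw [h]⟩
  refine Nat.dvd_antisymm ?_ ?_
  · exact ((hiff _).2 (isPeriodicPt_minimalPeriod _ _)).minimalPeriod_dvd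
  · exact ((hiff _).1 (isPeriodicPt_minimalPeriod _ _)).minimalPeriod_dvd

lemma minimalPeriod_eq_of_pow_eq {σ τ : Equiv.Perm α} {z : α}
    (h : ∀ i : ℕ, (σ ^ i) z = (τ ^ i) z) :
    minimalPeriod ⇑σ z = minimalPeriod ⇑τ z := by
  have hiff : ∀ n, IsPeriodicPt ⇑σ n z ↔ IsPeriodicPt ⇑τ n z := by
    intro n
    unfold IsPeriodicPt IsFixedPt
    rw [← pow_apply, ← pow_apply, h]
  refine Nat.dvd_antisymm ?_ ?_
  · exact ((hiff _).2 (isPeriodicPt_minimalPeriod ⇑τ z)).minimalPeriod_dvd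
  · exact ((hiff _).1 (isPeriodicPt_minimalPeriod ⇑σ z)).minimalPeriod_dvd

lemma minimalPeriod_subtypePerm {p : α → Prop} (σ : Equiv.Perm α)
    (h : ∀ a, p (σ a) ↔ p a) (z : Subtype p) :
    minimalPeriod ⇑(σ.subtypePerm h) z = minimalPeriod ⇑σ (z : α) :=
  (minimalPeriod_semiconj (g := ⇑σ) (e := (Subtype.val : Subtype p → α))
    Subtype.coe_injective (fun _ => rfl) z).symm

lemma subtypePerm_pow_apply {p : α → Prop} (σ : Equiv.Perm α)
    (h : ∀ a, p (σ a) ↔ p a) (z : Subtype p) (i : ℕ) :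
    ((σ.subtypePerm h ^ i) z : α) = (σ ^ i) (z : α) := by
  rw [Equiv.Perm.subtypePerm_pow]; rfl

lemma ofSubtype_pow_apply {p : α → Prop} [DecidablePred p] (σ : Equiv.Perm (Subtype p))
    (z : Subtype p) (i : ℕ) :
    (Equiv.Perm.ofSubtype σ ^ i) (z : α) = ((σ ^ i) z : α) := by
  rw [← map_pow, Equiv.Perm.ofSubtype_apply_coe]

lemma minimalPeriod_ofSubtype {p : α → Prop} [DecidablePred p] (σ : Equiv.Perm (Subtype p))
    (z : Subtype p) :
    minimalPeriod ⇑(Equiv.Perm.ofSubtype σ) (z : α) = minimalPeriod ⇑σ z :=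
  minimalPeriod_semiconj Subtype.coe_injective
    (fun a => (Equiv.Perm.ofSubtype_apply_coe σ a)) z

/-- forward-orbit membership is symmetric on a fintype -/
lemma orbit_symm [DecidableEq α] [Fintype α] {σ : Equiv.Perm α} {x z : α}
    (h : ∃ i : ℕ, (σ ^ i) x = z) : ∃ j : ℕ, (σ ^ j) z = x := by
  obtain ⟨i, hi⟩ := h
  have : σ.SameCycle x z := ⟨(i : ℤ), by rw [zpow_natCast]; exact hi⟩
  obtain ⟨j, _, _, hj⟩ := (this.symm).exists_pow_eq σ
  exact ⟨j, hj⟩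

section Splice

variable [DecidableEq α] [Fintype α]
variable {τ : Equiv.Perm α} {x y : α}

/-- iterates of the spliced permutation along the cycle of `x` -/
lemma pow_fix {τ : Equiv.Perm α} {y : α} (hy : τ y = y) (i : ℕ) : (τ ^ i) y = y := by
  induction i with
  | zero => rfl
  | succ j ihj => rw [pow_succ, Equiv.Perm.mul_apply, hy, ihj]

/-- iterates of the spliced permutation along the cycle of `x` -/
lemma splice_iter (hy : τ y = y) (hxy : y ≠ x) {i : ℕ} (h1 : 1 ≤ i)
    (h2 : i ≤ minimalPeriod ⇑τ x) :
    ((τ * Equiv.swap x y) ^ (i + 1)) x = (τ ^ i) x := by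
  set σ := τ * Equiv.swap x y with hσ
  have hσx : σ x = y := by
    simp [hσ, Equiv.swap_apply_left, hy]
  induction i with
  | zero => omega
  | succ i ih =>
    rcases Nat.eq_or_lt_of_le h1 with h1' | h1'
    · -- i + 1 = 1, base case
      have : i = 0 := by omega
      subst this
      show σ (σ x) = τ x
      rw [hσx]
      show τ (Equiv.swap x y y) = τ x
      rw [Equiv.swap_apply_right]
    · have hi1 : 1 ≤ i := by omega
      have hi2 : i ≤ minimalPeriod ⇑τ x := by omega
      have hilt : i < minimalPeriod ⇑τ x := by omega
      have hrec := ih hi1 hi2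
      have hne_x : (τ ^ i) x ≠ x := by
        intro hc
        have : IsPeriodicPt ⇑τ i x := by
          unfold IsPeriodicPt IsFixedPt
          rw [← pow_apply]; exact hc
        exact absurd (this.eq_zero_of_lt_minimalPeriod hilt) (by omega)
      have hne_y : (τ ^ i) x ≠ y := by
        intro hc
        rw [← pow_fix hy i] at hc
        exact hxy ((τ ^ i).injective hc).symm
      rw [show i + 1 + 1 = (i + 1) + 1 from rfl, pow_succ', Equiv.Perm.mul_apply, hrec, hσ,
        Equiv.Perm.mul_apply, Equiv.swap_apply_of_ne_of_ne hne_x hne_y,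
        pow_succ', Equiv.Perm.mul_apply]

/-- the spliced permutation has minimal period one larger at `x` -/
lemma splice_minimalPeriod (hy : τ y = y) (hxy : y ≠ x) :
    minimalPeriod ⇑(τ * Equiv.swap x y) x = minimalPeriod ⇑τ x + 1 := by
  set σ := τ * Equiv.swap x y with hσ
  set m := minimalPeriod ⇑τ x with hm
  have hm1 : 1 ≤ m := mp_pos τ x
  have hσx : σ x = y := by simp [hσ, Equiv.swap_apply_left, hy]
  have htop : (σ ^ (m + 1)) x = x := by
    rw [splice_iter hy hxy hm1 le_rfl, pow_apply]
    exact isPeriodicPt_minimalPeriod ⇑τ x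
  have hpp : IsPeriodicPt ⇑σ (m + 1) x := by
    unfold IsPeriodicPt IsFixedPt; rw [← pow_apply]; exact htop
  have hle : minimalPeriod ⇑σ x ≤ m + 1 := hpp.minimalPeriod_le (by omega)
  have hpos : 0 < minimalPeriod ⇑σ x := mp_pos σ x
  by_contra hne
  have hlt : minimalPeriod ⇑σ x < m + 1 := lt_of_le_of_ne hle hne
  have hit : (σ ^ minimalPeriod ⇑σ x) x = x := by
    rw [pow_apply]; exact iterate_minimalPeriod
  rcases Nat.eq_or_lt_of_le (Nat.one_le_iff_ne_zero.mpr (Nat.pos_iff_ne_zero.mp hpos))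
    with h1 | h1
  · rw [← h1, pow_one, hσx] at hit
    exact hxy hit
  · -- 2 ≤ minimalPeriod σ x ≤ m, write as i + 1 with 1 ≤ i ≤ m - 1
    obtain ⟨i, hieq⟩ : ∃ i, minimalPeriod ⇑σ x = i + 1 := ⟨_, (Nat.succ_pred_eq_of_pos hpos).symm⟩
    have hi1 : 1 ≤ i := by omega
    have hi2 : i ≤ m := by omega
    rw [hieq, splice_iter hy hxy hi1 hi2] at hit
    have : IsPeriodicPt ⇑τ i x := by
      unfold IsPeriodicPt IsFixedPt; rw [← pow_apply]; exact hit
    have := this.eq_zero_of_lt_minimalPeriod (by omega)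
    omega

lemma splice_orbit_ex (hy : τ y = y) (hxy : y ≠ x) (z : α) :
    (∃ i : ℕ, ((τ * Equiv.swap x y) ^ i) x = z) ↔
      (z = y ∨ ∃ i : ℕ, (τ ^ i) x = z) := by
  set σ := τ * Equiv.swap x y with hσ
  set m := minimalPeriod ⇑τ x with hm
  have hm1 : 1 ≤ m := mp_pos τ x
  have hσx : σ x = y := by simp [hσ, Equiv.swap_apply_left, hy]
  have hmp : minimalPeriod ⇑σ x = m + 1 := splice_minimalPeriod hy hxy
  constructor
  · rintro ⟨j, hj⟩
    have hred : (σ ^ (j % (m + 1))) x = z := by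
      rw [← hj, pow_apply, pow_apply]
      have := isPeriodicPt_minimalPeriod ⇑σ x
      rw [hmp] at this
      exact this.iterate_mod_apply j
    have hjlt : j % (m + 1) < m + 1 := Nat.mod_lt _ (by omega)
    rcases Nat.eq_zero_or_pos (j % (m + 1)) with h0 | hpos'
    · right; exact ⟨0, by rw [pow_zero, ← hred, h0, pow_zero]⟩
    · rcases Nat.eq_or_lt_of_le hpos' with h1 | h1
      · left; rw [← hred, ← h1, pow_one, hσx]
      · right
        obtain ⟨i, hieq⟩ : ∃ i, j % (m + 1) = i + 1 :=
          ⟨_, (Nat.succ_pred_eq_of_pos hpos').symm⟩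
        refine ⟨i, ?_⟩
        rw [← hred, hieq]
        exact (splice_iter hy hxy (by omega) (by omega)).symm
  · rintro (rfl | ⟨i, hi⟩)
    · exact ⟨1, by rw [pow_one, hσx]⟩
    · have hred : (τ ^ (i % m)) x = z := by
        rw [← hi, pow_apply, pow_apply]
        exact (isPeriodicPt_minimalPeriod ⇑τ x).iterate_mod_apply i
      rcases Nat.eq_zero_or_pos (i % m) with h0 | hpos'
      · exact ⟨0, by rw [pow_zero, ← hred, h0, pow_zero]⟩
      · refine ⟨i % m + 1, ?_⟩
        rw [splice_iter hy hxy hpos' (le_of_lt (Nat.mod_lt _ (by omega))), hred]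

/-- orbit of `x` under the spliced permutation, complement form -/
lemma splice_orbit (hy : τ y = y) (hxy : y ≠ x) (z : α) :
    (∀ i : ℕ, ((τ * Equiv.swap x y) ^ i) x ≠ z) ↔
      (z ≠ y ∧ ∀ i : ℕ, (τ ^ i) x ≠ z) := by
  rw [← not_exists, splice_orbit_ex hy hxy z, not_or, not_exists]

/-- agreement of the spliced permutation away from the cycle of `x` and `y` -/
lemma splice_agree (hy : τ y = y) (hxy : y ≠ x) {z : α} (hzy : z ≠ y)
    (hz : ∀ i : ℕ, (τ ^ i) x ≠ z) (i : ℕ) :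
    ((τ * Equiv.swap x y) ^ i) z = (τ ^ i) z := by
  induction i with
  | zero => rfl
  | succ i ih =>
    have hne_y : (τ ^ i) z ≠ y := by
      intro hc
      rw [← pow_fix hy i] at hc
      exact hzy ((τ ^ i).injective hc)
    have hne_x : (τ ^ i) z ≠ x := by
      intro hc
      obtain ⟨j, hj⟩ := orbit_symm (σ := τ) ⟨i, hc⟩
      exact hz j hj
    rw [pow_succ', Equiv.Perm.mul_apply, ih, Equiv.Perm.mul_apply,
      Equiv.swap_apply_of_ne_of_ne hne_x hne_y, pow_succ', Equiv.Perm.mul_apply]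

lemma splice_minimalPeriod_away (hy : τ y = y) (hxy : y ≠ x) {z : α} (hzy : z ≠ y)
    (hz : ∀ i : ℕ, (τ ^ i) x ≠ z) :
    minimalPeriod ⇑(τ * Equiv.swap x y) z = minimalPeriod ⇑τ z :=
  minimalPeriod_eq_of_pow_eq (splice_agree hy hxy hzy hz)

/-- characterization of `QProp` for a spliced permutation -/
lemma splice_qprop_iff (r k : ℕ) (hy : τ y = y) (hxy : y ≠ x) :
    QProp r (k + 1) x (τ * Equiv.swap x y) ↔
      (minimalPeriod ⇑τ x = k ∧
        ∀ z, z ≠ y → (∀ i : ℕ, (τ ^ i) x ≠ z) → ¬ r ∣ minimalPeriod ⇑τ z) := by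
  unfold QProp
  rw [splice_minimalPeriod hy hxy]
  constructor
  · rintro ⟨h1, h2⟩
    refine ⟨by omega, fun z hzy hz => ?_⟩
    rw [← splice_minimalPeriod_away hy hxy hzy hz]
    exact h2 z ((splice_orbit hy hxy z).mpr ⟨hzy, hz⟩)
  · rintro ⟨h1, h2⟩
    refine ⟨by omega, fun z hz => ?_⟩
    obtain ⟨hzy, hz'⟩ := (splice_orbit hy hxy z).mp hz
    rw [splice_minimalPeriod_away hy hxy hzy hz']
    exact h2 z hzy hz'

end Splice

section Congr

variable {α β : Type*} (e : α ≃ β)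

lemma permCongr_pow_apply (σ : Equiv.Perm α) (i : ℕ) (a : α) :
    ((e.permCongr σ) ^ i) (e a) = e ((σ ^ i) a) := by
  induction i with
  | zero => rfl
  | succ i ih =>
    rw [pow_succ', pow_succ', Equiv.Perm.mul_apply, Equiv.Perm.mul_apply, ih,
      Equiv.permCongr_apply, Equiv.symm_apply_apply]

lemma minimalPeriod_permCongr (σ : Equiv.Perm α) (a : α) :
    minimalPeriod ⇑(e.permCongr σ) (e a) = minimalPeriod ⇑σ a :=
  minimalPeriod_semiconj e.injective
    (fun b => by rw [Equiv.permCongr_apply, Equiv.symm_apply_apply]) a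

lemma qprop_congr (r k : ℕ) (x : α) (σ : Equiv.Perm α) :
    QProp r k x σ ↔ QProp r k (e x) (e.permCongr σ) := by
  unfold QProp
  rw [minimalPeriod_permCongr]
  refine and_congr Iff.rfl ⟨fun h z hz => ?_, fun h z hz => ?_⟩
  · have hz' : ∀ i : ℕ, (σ ^ i) x ≠ e.symm z := by
      intro i hc
      exact hz i (by rw [show z = e (e.symm z) from (e.apply_symm_apply z).symm, ← hc,
        permCongr_pow_apply])
    have := h (e.symm z) hz'
    rwa [← minimalPeriod_permCongr e σ (e.symm z), e.apply_symm_apply] at this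
  · have hz' : ∀ i : ℕ, ((e.permCongr σ) ^ i) (e x) ≠ e z := by
      intro i hc
      rw [permCongr_pow_apply] at hc
      exact hz i (e.injective hc)
    have := h (e z) hz'
    rwa [minimalPeriod_permCongr] at this

lemma card_qprop_congr (r k : ℕ) (x : α) :
    Nat.card {σ : Equiv.Perm α // QProp r k x σ} =
      Nat.card {σ : Equiv.Perm β // QProp r k (e x) σ} :=
  Nat.card_congr (Equiv.subtypeEquiv e.permCongr fun σ => qprop_congr e r k x σ)

/-- permutations all of whose cycle lengths avoid multiples of `r` -/
def GoodPerm (r : ℕ) {α : Type*} (σ : Equiv.Perm α) : Prop :=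
  ∀ z, ¬ r ∣ minimalPeriod ⇑σ z

lemma goodPerm_congr (r : ℕ) (σ : Equiv.Perm α) :
    GoodPerm r σ ↔ GoodPerm r (e.permCongr σ) := by
  constructor
  · intro h z
    rw [show z = e (e.symm z) from (e.apply_symm_apply z).symm, minimalPeriod_permCongr]
    exact h _
  · intro h z
    rw [← minimalPeriod_permCongr e σ z]
    exact h _

lemma card_goodPerm_congr (e : α ≃ β) (r : ℕ) :
    Nat.card {σ : Equiv.Perm α // GoodPerm r σ} =
      Nat.card {σ : Equiv.Perm β // GoodPerm r σ} :=
  Nat.card_congr (Equiv.subtypeEquiv e.permCongr fun σ => goodPerm_congr e r σ)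

end Congr

/-- the count of good permutations of `Fin m` -/
noncomputable def Dcount (r m : ℕ) : ℕ := Nat.card {σ : Equiv.Perm (Fin m) // GoodPerm r σ}

lemma card_goodPerm (r : ℕ) {α : Type*} [Fintype α] :
    Nat.card {σ : Equiv.Perm α // GoodPerm r σ} = Dcount r (Fintype.card α) :=
  card_goodPerm_congr (Fintype.equivFin α) r

section Count

variable {α : Type*} [Fintype α] [DecidableEq α]

/-- base case: fixed point at `x`, good elsewhere -/
noncomputable def equivBase (r : ℕ) (x : α) :
    {σ : Equiv.Perm α // QProp r 1 x σ} ≃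
      {σ' : Equiv.Perm {z : α // z ≠ x} // GoodPerm r σ'} where
  toFun := fun ⟨σ, h⟩ => by
    have hfix : σ x = x := minimalPeriod_eq_one_iff_isFixedPt.mp h.1
    have fixiff : ∀ z, z ≠ x ↔ σ z ≠ x := by
      intro z
      constructor
      · intro hz hc
        exact hz (σ.injective (hc.trans hfix.symm))
      · intro hz hc
        exact hz (hc ▸ hfix)
    refine ⟨σ.subtypePerm (fun z => (fixiff z).symm), fun z' => ?_⟩
    rw [minimalPeriod_subtypePerm]
    refine h.2 _ (fun i hc => ?_)
    rw [pow_fix hfix] at hc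
    exact z'.2 hc.symm
  invFun := fun ⟨σ', h'⟩ => by
    refine ⟨Equiv.Perm.ofSubtype σ', ?_, ?_⟩
    · exact minimalPeriod_eq_one_iff_isFixedPt.mpr
        (Equiv.Perm.ofSubtype_apply_of_not_mem σ' (by simp))
    · intro z hz
      have hfix : Equiv.Perm.ofSubtype σ' x = x :=
        Equiv.Perm.ofSubtype_apply_of_not_mem σ' (by simp)
      have hzx : z ≠ x := fun hc => hz 0 (by rw [pow_zero, Equiv.Perm.one_apply, hc])
      rw [show z = ((⟨z, hzx⟩ : {z : α // z ≠ x}) : α) from rfl, minimalPeriod_ofSubtype]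
      exact h' _
  left_inv := fun ⟨σ, h⟩ => by
    apply Subtype.ext
    apply Equiv.Perm.ofSubtype_subtypePerm
    intro z hz
    intro hc
    subst hc
    exact hz (minimalPeriod_eq_one_iff_isFixedPt.mp h.1)
  right_inv := fun ⟨σ', h'⟩ => by
    apply Subtype.ext
    exact Equiv.Perm.subtypePerm_ofSubtype σ'

/-- the intermediate predicate after splicing out `σ x` -/
def StepPred (r k : ℕ) (x : α) (p : α × Equiv.Perm α) : Prop :=
  p.1 ≠ x ∧ p.2 p.1 = p.1 ∧ minimalPeriod ⇑p.2 x = k ∧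
    ∀ z, z ≠ p.1 → (∀ i : ℕ, (p.2 ^ i) x ≠ z) → ¬ r ∣ minimalPeriod ⇑p.2 z

noncomputable def equivStep (r k : ℕ) (hk : 1 ≤ k) (x : α) :
    {σ : Equiv.Perm α // QProp r (k + 1) x σ} ≃
      {p : α × Equiv.Perm α // StepPred r k x p} where
  toFun := fun ⟨σ, h⟩ => by
    have hyx : σ x ≠ x := by
      intro hc
      have := minimalPeriod_eq_one_iff_isFixedPt.mpr hc
      rw [h.1] at this
      omega
    have hy : (σ * Equiv.swap x (σ x)) (σ x) = σ x := by
      rw [Equiv.Perm.mul_apply, Equiv.swap_apply_right]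
    have hq : QProp r (k + 1) x ((σ * Equiv.swap x (σ x)) * Equiv.swap x (σ x)) := by
      rwa [mul_assoc, Equiv.swap_mul_self, mul_one]
    exact ⟨(σ x, σ * Equiv.swap x (σ x)), hyx, hy,
      ((splice_qprop_iff r k hy hyx).mp hq).1, ((splice_qprop_iff r k hy hyx).mp hq).2⟩
  invFun := fun ⟨p, h⟩ => by
    refine ⟨p.2 * Equiv.swap x p.1, ?_⟩
    exact (splice_qprop_iff r k h.2.1 h.1).mpr ⟨h.2.2.1, h.2.2.2⟩
  left_inv := fun ⟨σ, h⟩ => by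
    apply Subtype.ext
    show σ * Equiv.swap x (σ x) * Equiv.swap x (σ x) = σ
    rw [mul_assoc, Equiv.swap_mul_self, mul_one]
  right_inv := fun ⟨p, h⟩ => by
    apply Subtype.ext
    have hσx : (p.2 * Equiv.swap x p.1) x = p.1 := by
      rw [Equiv.Perm.mul_apply, Equiv.swap_apply_left, h.2.1]
    show ((p.2 * Equiv.swap x p.1) x,
      p.2 * Equiv.swap x p.1 * Equiv.swap x ((p.2 * Equiv.swap x p.1) x)) = p
    rw [hσx, mul_assoc, Equiv.swap_mul_self, mul_one]

/-- the fiber predicate for a fixed choice of removed point `y` -/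
def FiberPred (r k : ℕ) (x y : α) (τ : Equiv.Perm α) : Prop :=
  τ y = y ∧ minimalPeriod ⇑τ x = k ∧
    ∀ z, z ≠ y → (∀ i : ℕ, (τ ^ i) x ≠ z) → ¬ r ∣ minimalPeriod ⇑τ z

def equivSigma (r k : ℕ) (x : α) :
    {p : α × Equiv.Perm α // StepPred r k x p} ≃
      Σ y : {y : α // y ≠ x}, {τ : Equiv.Perm α // FiberPred r k x (y : α) τ} where
  toFun := fun ⟨p, h⟩ => ⟨⟨p.1, h.1⟩, ⟨p.2, h.2.1, h.2.2.1, h.2.2.2⟩⟩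
  invFun := fun ⟨y, τ⟩ => ⟨(y.1, τ.1), y.2, τ.2.1, τ.2.2.1, τ.2.2.2⟩
  left_inv := fun ⟨p, h⟩ => rfl
  right_inv := fun ⟨y, τ⟩ => rfl

/-- restricting a fiber permutation to the complement of `y` -/
noncomputable def equivFiber (r k : ℕ) {x y : α} (hyx : y ≠ x) :
    {τ : Equiv.Perm α // FiberPred r k x y τ} ≃
      {σ' : Equiv.Perm {z : α // z ≠ y} // QProp r k (⟨x, Ne.symm hyx⟩ : {z : α // z ≠ y}) σ'}
    where
  toFun := fun ⟨τ, hfix, hmp, hrest⟩ => by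
    have fixiff : ∀ z, z ≠ y ↔ τ z ≠ y := by
      intro z
      constructor
      · intro hz hc
        exact hz (τ.injective (hc.trans hfix.symm))
      · intro hz hc
        exact hz (hc ▸ hfix)
    refine ⟨τ.subtypePerm (fun z => (fixiff z).symm), ?_, ?_⟩
    · rw [minimalPeriod_subtypePerm]
      exact hmp
    · intro z' hz'
      rw [minimalPeriod_subtypePerm]
      refine hrest _ z'.2 (fun i hc => ?_)
      refine hz' i (Subtype.ext ?_)
      rw [subtypePerm_pow_apply]
      exact hc
  invFun := fun ⟨σ', h'⟩ => by
    refine ⟨Equiv.Perm.ofSubtype σ', ?_, ?_, ?_⟩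
    · exact Equiv.Perm.ofSubtype_apply_of_not_mem σ' (by simp)
    · rw [show x = ((⟨x, Ne.symm hyx⟩ : {z : α // z ≠ y}) : α) from rfl,
        minimalPeriod_ofSubtype]
      exact h'.1
    · intro z hz horb
      rw [show z = ((⟨z, hz⟩ : {z : α // z ≠ y}) : α) from rfl, minimalPeriod_ofSubtype]
      refine h'.2 _ (fun i hc => ?_)
      refine horb i ?_
      rw [show x = ((⟨x, Ne.symm hyx⟩ : {z : α // z ≠ y}) : α) from rfl,
        ofSubtype_pow_apply, hc]
  left_inv := fun ⟨τ, hfix, hmp, hrest⟩ => by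
    apply Subtype.ext
    apply Equiv.Perm.ofSubtype_subtypePerm
    intro z hz hc
    subst hc
    exact hz hfix
  right_inv := fun ⟨σ', h'⟩ => by
    apply Subtype.ext
    exact Equiv.Perm.subtypePerm_ofSubtype σ'

lemma nat_card_sigma {Y : Type*} [Fintype Y] {F : Y → Type*} [∀ y, Finite (F y)] :
    Nat.card (Σ y : Y, F y) = ∑ y : Y, Nat.card (F y) := by
  haveI : ∀ y, Fintype (F y) := fun y => Fintype.ofFinite _
  simp [Nat.card_eq_fintype_card]

lemma card_ne (x : α) : Fintype.card {z : α // z ≠ x} = Fintype.card α - 1 := by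
  simp [Fintype.card_subtype_compl]

end Count

/-- master counting lemma -/
lemma card_q (r : ℕ) : ∀ k : ℕ, 1 ≤ k →
    ∀ (β : Type) [Fintype β] [DecidableEq β] (x : β), k ≤ Fintype.card β →
    Nat.card {σ : Equiv.Perm β // QProp r k x σ} =
      (Fintype.card β - 1).descFactorial (k - 1) * Dcount r (Fintype.card β - k) := by
  intro k
  induction k with
  | zero => omega
  | succ k ih =>
    intro _ β _ _ x hcard
    rcases Nat.eq_zero_or_pos k with rfl | hk
    · -- base case k + 1 = 1
      rw [Nat.card_congr (equivBase r x), card_goodPerm, card_ne]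
      simp
    · -- inductive step
      have hn2 : 2 ≤ Fintype.card β := le_trans (by omega) hcard
      rw [Nat.card_congr ((equivStep r k hk x).trans (equivSigma r k x)), nat_card_sigma]
      have hfib : ∀ y : {y : β // y ≠ x},
          Nat.card {τ : Equiv.Perm β // FiberPred r k x (y : β) τ} =
            (Fintype.card β - 2).descFactorial (k - 1) *
              Dcount r (Fintype.card β - 1 - k) := by
        intro y
        rw [Nat.card_congr (equivFiber r k y.2)]
        have := ih hk {z : β // z ≠ (y : β)} (⟨x, Ne.symm y.2⟩ : {z : β // z ≠ (y : β)})
          (by rw [card_ne]; omega)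
        rw [this, card_ne]
        congr 2 <;> omega
      rw [Finset.sum_congr rfl (fun y _ => hfib y), Finset.sum_const, smul_eq_mul]
      have hY : Fintype.card {y : β // y ≠ x} = Fintype.card β - 1 := card_ne x
      rw [Finset.card_univ, hY]
      have h1 : (Fintype.card β - 1).descFactorial (k + 1 - 1) =
          (Fintype.card β - 1) * (Fintype.card β - 2).descFactorial (k - 1) := by
        have e1 : Fintype.card β - 1 = (Fintype.card β - 2) + 1 := by omega
        have e2 : k + 1 - 1 = (k - 1) + 1 := by omega
        rw [e1, e2, Nat.succ_descFactorial_succ]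
      have e3 : Fintype.card β - 1 - k = Fintype.card β - (k + 1) := by omega
      rw [e3, h1, mul_assoc]

lemma mp_le_card {α : Type*} [Fintype α] (σ : Equiv.Perm α) (x : α) :
    minimalPeriod ⇑σ x ≤ Fintype.card α := by
  have hinj : Function.Injective (fun i : Fin (minimalPeriod ⇑σ x) => (⇑σ)^[(i : ℕ)] x) := by
    intro i j hij
    exact Fin.ext (iterate_injOn_Iio_minimalPeriod i.2 j.2 hij)
  simpa using Fintype.card_le_of_injective _ hinj

lemma dcount_zero (r : ℕ) : Dcount r 0 = 1 := by
  unfold Dcount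
  have h : ∀ σ : Equiv.Perm (Fin 0), GoodPerm r σ := fun σ z => z.elim0
  rw [Nat.card_congr (Equiv.subtypeUnivEquiv h)]
  simp [Nat.card_eq_fintype_card]

lemma good_iff_qprop {α : Type*} [Fintype α] {r j : ℕ} (hj : ¬ r ∣ j) (x : α)
    (σ : Equiv.Perm α) :
    (GoodPerm r σ ∧ minimalPeriod ⇑σ x = j) ↔ QProp r j x σ := by
  constructor
  · rintro ⟨hg, hmp⟩
    exact ⟨hmp, fun z _ => hg z⟩
  · rintro ⟨hmp, hrest⟩
    refine ⟨fun z => ?_, hmp⟩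
    by_cases horb : ∀ i : ℕ, (σ ^ i) x ≠ z
    · exact hrest z horb
    · push_neg at horb
      obtain ⟨i, hi⟩ := horb
      have : minimalPeriod ⇑σ z = minimalPeriod ⇑σ x := by
        rw [← hi, pow_apply]
        exact minimalPeriod_apply_iterate (perm_mem_periodicPts σ x) i
      rw [this, hmp]
      exact hj

/-- decomposition of good permutations by the length of the cycle of `x` -/
noncomputable def equivGoodSigma (r m : ℕ) (hm : 1 ≤ m) (x : Fin m) :
    {σ : Equiv.Perm (Fin m) // GoodPerm r σ} ≃
      Σ j : {j : ℕ // j ∈ (Finset.Icc 1 m).filter (fun j => ¬ r ∣ j)},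
        {σ : Equiv.Perm (Fin m) // QProp r (j : ℕ) x σ} where
  toFun := fun ⟨σ, h⟩ =>
    ⟨⟨minimalPeriod ⇑σ x, by
        simp only [Finset.mem_filter, Finset.mem_Icc]
        refine ⟨⟨mp_pos σ x, ?_⟩, h x⟩
        simpa using mp_le_card σ x⟩,
      ⟨σ, (good_iff_qprop (h x) x σ).mp ⟨h, rfl⟩⟩⟩
  invFun := fun ⟨j, σh⟩ =>
    ⟨σh.1, by
      have hj : ¬ r ∣ (j : ℕ) := (Finset.mem_filter.mp j.2).2
      exact ((good_iff_qprop hj x σh.1).mpr σh.2).1⟩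
  left_inv := fun ⟨σ, h⟩ => rfl
  right_inv := fun ⟨⟨j, hj⟩, ⟨σ, hσ⟩⟩ => by
    have h1 : minimalPeriod ⇑σ x = j := hσ.1
    subst h1
    rfl

lemma recur_D (r m : ℕ) (hm : 1 ≤ m) :
    Dcount r m = ∑ j ∈ (Finset.Icc 1 m).filter (fun j => ¬ r ∣ j),
      (m - 1).descFactorial (j - 1) * Dcount r (m - j) := by
  have x : Fin m := ⟨0, by omega⟩
  rw [show Dcount r m = Nat.card {σ : Equiv.Perm (Fin m) // GoodPerm r σ} from rfl,
    Nat.card_congr (equivGoodSigma r m hm x), nat_card_sigma]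
  rw [← Finset.sum_coe_sort ((Finset.Icc 1 m).filter (fun j => ¬ r ∣ j))
    (fun j => (m - 1).descFactorial (j - 1) * Dcount r (m - j))]
  refine Finset.sum_congr rfl (fun j _ => ?_)
  have hj := Finset.mem_filter.mp j.2
  have hj1 : 1 ≤ (j : ℕ) := (Finset.mem_Icc.mp hj.1).1
  have hjm : (j : ℕ) ≤ m := (Finset.mem_Icc.mp hj.1).2
  have := card_q r (j : ℕ) hj1 (Fin m) x (by simpa using hjm)
  rw [this]
  simp

/-- normalized count -/
noncomputable def A (r m : ℕ) : ℚ := (Dcount r m : ℚ) / (m.factorial : ℚ)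

lemma descF_cast {m j : ℕ} (h1 : 1 ≤ j) (h2 : j ≤ m) :
    (((m - 1).descFactorial (j - 1) : ℕ) : ℚ) =
      ((m - 1).factorial : ℚ) / ((m - j).factorial : ℚ) := by
  have h := Nat.factorial_mul_descFactorial (n := m - 1) (k := j - 1) (by omega)
  have he : m - 1 - (j - 1) = m - j := by omega
  rw [he] at h
  have hne : ((m - j).factorial : ℚ) ≠ 0 := by
    exact_mod_cast (Nat.factorial_pos (m - j)).ne'
  rw [eq_div_iff hne, mul_comm]
  exact_mod_cast h

lemma rec_A (r m : ℕ) (hm : 1 ≤ m) :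
    (m : ℚ) * A r m = ∑ j ∈ (Finset.Icc 1 m).filter (fun j => ¬ r ∣ j), A r (m - j) := by
  have hmfac : ((m.factorial : ℕ) : ℚ) = (m : ℚ) * ((m - 1).factorial : ℚ) := by
    exact_mod_cast (Nat.mul_factorial_pred (by omega : m ≠ 0)).symm
  have hfacne : ((m - 1).factorial : ℚ) ≠ 0 := by
    exact_mod_cast (Nat.factorial_pos (m - 1)).ne'
  have hmne : (m : ℚ) ≠ 0 := by exact_mod_cast (by omega : m ≠ 0)
  unfold A
  rw [hmfac]
  rw [show (m : ℚ) * ((Dcount r m : ℚ) / ((m : ℚ) * ((m - 1).factorial : ℚ))) =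
      (Dcount r m : ℚ) / ((m - 1).factorial : ℚ) by field_simp]
  rw [recur_D r m hm]
  push_cast
  rw [Finset.sum_div]
  refine Finset.sum_congr rfl (fun j hj => ?_)
  have hj' := Finset.mem_filter.mp hj
  have hj1 : 1 ≤ j := (Finset.mem_Icc.mp hj'.1).1
  have hjm : j ≤ m := (Finset.mem_Icc.mp hj'.1).2
  rw [descF_cast hj1 hjm]
  have hne2 : ((m - j).factorial : ℚ) ≠ 0 := by
    exact_mod_cast (Nat.factorial_pos (m - j)).ne'
  field_simp

lemma A_eq (r : ℕ) (hr : 2 ≤ r) :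
    ∀ m : ℕ, 1 ≤ m → ¬ r ∣ m → A r m = A r (m - 1) := by
  intro m
  induction m using Nat.strong_induction_on with
  | _ m IH =>
    intro hm hd
    have hmne : (m : ℚ) ≠ 0 := by exact_mod_cast (by omega : m ≠ 0)
    refine mul_left_cancel₀ hmne ?_
    rw [rec_A r m hm]
    have h1mem : 1 ∈ (Finset.Icc 1 m).filter (fun j => ¬ r ∣ j) := by
      simp only [Finset.mem_filter, Finset.mem_Icc]
      exact ⟨⟨le_refl 1, hm⟩, fun hc => by
        have := Nat.le_of_dvd (by omega) hc
        omega⟩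
    rw [← Finset.add_sum_erase _ _ h1mem]
    have herase : ((Finset.Icc 1 m).filter (fun j => ¬ r ∣ j)).erase 1 =
        (Finset.Icc 2 m).filter (fun j => ¬ r ∣ j) := by
      ext j
      simp only [Finset.mem_erase, Finset.mem_filter, Finset.mem_Icc]
      constructor
      · rintro ⟨hne, ⟨hj1, hjm⟩, hdvd⟩
        exact ⟨⟨by omega, hjm⟩, hdvd⟩
      · rintro ⟨⟨hj2, hjm⟩, hdvd⟩
        exact ⟨by omega, ⟨by omega, hjm⟩, hdvd⟩
    rw [herase]
    rcases Nat.eq_or_lt_of_le hm with h1 | hm2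
    · -- m = 1
      rw [← h1]
      norm_num
    · -- m ≥ 2
      have key : ∑ j ∈ (Finset.Icc 2 m).filter (fun j => ¬ r ∣ j), A r (m - j) =
          ∑ j ∈ (Finset.Icc 2 m).filter (fun j => ¬ r ∣ (j - 1)), A r (m - j) := by
        have hsplit1 := Finset.sum_filter_add_sum_filter_not (Finset.Icc 2 m)
          (fun j => r ∣ j) (fun j => A r (m - j))
        have hsplit2 := Finset.sum_filter_add_sum_filter_not (Finset.Icc 2 m)
          (fun j => r ∣ (j - 1)) (fun j => A r (m - j))
        have hdiv : ∑ j ∈ (Finset.Icc 2 m).filter (fun j => r ∣ j), A r (m - j) =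
            ∑ j ∈ (Finset.Icc 2 m).filter (fun j => r ∣ (j - 1)), A r (m - j) := by
          refine Finset.sum_nbij' (fun j => j + 1) (fun j => j - 1) ?_ ?_ ?_ ?_ ?_
          · intro j hj
            have hj' := Finset.mem_filter.mp hj
            have hj2 := Finset.mem_Icc.mp hj'.1
            have hjm : j ≠ m := fun hc => hd (hc ▸ hj'.2)
            show j + 1 ∈ (Finset.Icc 2 m).filter (fun j => r ∣ (j - 1))
            simp only [Finset.mem_filter, Finset.mem_Icc]
            exact ⟨⟨by omega, by omega⟩, by simpa using hj'.2⟩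
          · intro j hj
            have hj' := Finset.mem_filter.mp hj
            have hj2 := Finset.mem_Icc.mp hj'.1
            have hge : r ≤ j - 1 := Nat.le_of_dvd (by omega) hj'.2
            show j - 1 ∈ (Finset.Icc 2 m).filter (fun j => r ∣ j)
            simp only [Finset.mem_filter, Finset.mem_Icc]
            exact ⟨⟨by omega, by omega⟩, hj'.2⟩
          · intro j _
            show j + 1 - 1 = j
            omega
          · intro j hj
            have hj' := Finset.mem_filter.mp hj
            have hj2 := Finset.mem_Icc.mp hj'.1
            show j - 1 + 1 = j
            omega
          · intro j hj
            have hj' := Finset.mem_filter.mp hj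
            have hj2 := Finset.mem_Icc.mp hj'.1
            have hjm : j ≠ m := fun hc => hd (hc ▸ hj'.2)
            have hrmj : ¬ r ∣ (m - j) := by
              intro hc
              refine hd ?_
              have : m = (m - j) + j := by omega
              rw [this]
              exact Nat.dvd_add hc hj'.2
            show A r (m - j) = A r (m - (j + 1))
            rw [IH (m - j) (by omega) (by omega) hrmj]
            congr 1
        linarith [hsplit1, hsplit2, hdiv]
      rw [key]
      have reindex : ∑ j ∈ (Finset.Icc 1 (m - 1)).filter (fun j => ¬ r ∣ j),
            A r (m - 1 - j) =
          ∑ j ∈ (Finset.Icc 2 m).filter (fun j => ¬ r ∣ (j - 1)), A r (m - j) := by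
        refine Finset.sum_nbij' (fun j => j + 1) (fun j => j - 1) ?_ ?_ ?_ ?_ ?_
        · intro j hj
          have hj' := Finset.mem_filter.mp hj
          have hj2 := Finset.mem_Icc.mp hj'.1
          show j + 1 ∈ (Finset.Icc 2 m).filter (fun j => ¬ r ∣ (j - 1))
          simp only [Finset.mem_filter, Finset.mem_Icc]
          exact ⟨⟨by omega, by omega⟩, by simpa using hj'.2⟩
        · intro j hj
          have hj' := Finset.mem_filter.mp hj
          have hj2 := Finset.mem_Icc.mp hj'.1
          show j - 1 ∈ (Finset.Icc 1 (m - 1)).filter (fun j => ¬ r ∣ j)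
          simp only [Finset.mem_filter, Finset.mem_Icc]
          exact ⟨⟨by omega, by omega⟩, hj'.2⟩
        · intro j _
          show j + 1 - 1 = j
          omega
        · intro j hj
          have hj' := Finset.mem_filter.mp hj
          have hj2 := Finset.mem_Icc.mp hj'.1
          show j - 1 + 1 = j
          omega
        · intro j _
          show A r (m - 1 - j) = A r (m - (j + 1))
          congr 1
          omega
      rw [← reindex, ← rec_A r (m - 1) (by omega)]
      have hcast : (((m - 1 : ℕ)) : ℚ) = (m : ℚ) - 1 := by
        push_cast [Nat.cast_sub hm]
        ring
      rw [hcast]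
      ring

lemma D_step (r : ℕ) (hr : 2 ≤ r) {m : ℕ} (hm : 1 ≤ m) (hd : ¬ r ∣ m) :
    Dcount r m = m * Dcount r (m - 1) := by
  have h := A_eq r hr m hm hd
  unfold A at h
  have hfac1 : ((m.factorial : ℕ) : ℚ) ≠ 0 := by
    exact_mod_cast (Nat.factorial_pos m).ne'
  have hfac2 : (((m - 1).factorial : ℕ) : ℚ) ≠ 0 := by
    exact_mod_cast (Nat.factorial_pos (m - 1)).ne'
  rw [div_eq_div_iff hfac1 hfac2] at h
  have hmfac : ((m.factorial : ℕ) : ℚ) = (m : ℚ) * (((m - 1).factorial : ℕ) : ℚ) := by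
    exact_mod_cast (Nat.mul_factorial_pred (by omega : m ≠ 0)).symm
  rw [hmfac] at h
  have h2 : (Dcount r m : ℚ) * (((m - 1).factorial : ℕ) : ℚ) =
      ((m : ℚ) * (Dcount r (m - 1) : ℚ)) * (((m - 1).factorial : ℕ) : ℚ) := by
    rw [h]; ring
  exact_mod_cast mul_right_cancel₀ hfac2 h2

end Stmt4Aux

/-- `|Q_{r,k}(n)| = |Q_{r,k+1}(n)|` when `r ∤ n - k`. -/
theorem stmt4 (n r k : ℕ) (hr : 2 ≤ r) (hk : 1 ≤ k) (hd : ¬ r ∣ n - k) :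
    Nat.card {σ : Equiv.Perm (Fin n) // QProp r k
        (⟨0, by
          rcases Nat.eq_zero_or_pos n with h | h
          · subst h; simp at hd
          · exact h⟩ : Fin n) σ} =
      Nat.card {σ : Equiv.Perm (Fin n) // QProp r (k + 1)
        (⟨0, by
          rcases Nat.eq_zero_or_pos n with h | h
          · subst h; simp at hd
          · exact h⟩ : Fin n) σ} := by
  have hkn : k < n := by
    by_contra hc
    push_neg at hc
    have : n - k = 0 := by omega
    rw [this] at hd
    exact hd (dvd_zero r)
  have hn0 : 0 < n := by omega
  have hcard : Fintype.card (Fin n) = n := Fintype.card_fin n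
  rw [Stmt4Aux.card_q r k hk (Fin n) (⟨0, hn0⟩ : Fin n) (by omega),
    Stmt4Aux.card_q r (k + 1) (by omega) (Fin n) (⟨0, hn0⟩ : Fin n) (by omega)]
  rw [hcard]
  have hm1 : 1 ≤ n - k := by omega
  rw [Stmt4Aux.D_step r hr hm1 hd]
  have e1 : k + 1 - 1 = (k - 1) + 1 := by omega
  rw [e1, Nat.descFactorial_succ]
  have e2 : n - 1 - (k - 1) = n - k := by omega
  have e3 : n - (k + 1) = n - k - 1 := by omega
  rw [e2, e3]
  ring
end
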